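/- arXiv:2211.03133 — 4 statements merged into one kernel-verified Lean document; each statement's English description precedes it below -/
import Mathlib

section
/- Let s and k be integers with 3 ≤ k ≤ s−2. For every ε > 0 there exists n₀ such that for all n ≥ n₀: if G is a K_s-saturated graph on n vertices with N(M_k, G) = sat(n, M_k, K_s), then G contains a subgraph isomorphic to S_{m,s−2} for some integer m ≥ (1−ε)·n. -/
set_option linter.unusedSectionVars false
set_option maxHeartbeats 1000000


/-- `sGraph n k` is the join `S_{n,k}` of the complete graph `K_k` with the empty graph on
`n - k` vertices: the first `k` vertices of `Fin n` form a clique joined to the rest. -/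
def sGraph (n k : ℕ) : SimpleGraph (Fin n) where
  Adj i j := i ≠ j ∧ ((i : ℕ) < k ∨ (j : ℕ) < k)
  symm := ⟨fun i j h => ⟨h.1.symm, h.2.symm⟩⟩
  loopless := ⟨fun i h => h.1 rfl⟩

/-- `G` is `K_s`-saturated: `G` has no `K_s` subgraph, but adding any edge between two
distinct nonadjacent vertices creates one. -/
def IsKSat {V : Type*} (G : SimpleGraph V) (s : ℕ) : Prop :=
  G.CliqueFree s ∧
    ∀ u v : V, u ≠ v → ¬ G.Adj u v →
      ¬ (G ⊔ SimpleGraph.fromEdgeSet {s(u, v)}).CliqueFree s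

/-- `numMatchings G k` is the number of copies of `M_k` in `G`, i.e. the number of
`k`-element sets of pairwise disjoint edges of `G`. -/
noncomputable def numMatchings {V : Type*} (G : SimpleGraph V) (k : ℕ) : ℕ :=
  Set.ncard {M : Finset (Sym2 V) | M.card = k ∧ (∀ e ∈ M, e ∈ G.edgeSet) ∧
    ∀ e ∈ M, ∀ f ∈ M, e ≠ f → ∀ v, v ∈ e → v ∉ f}

/-- `satM n k s` is the minimum number of copies of `M_k` over all `K_s`-saturated graphs
on `n` vertices. -/
noncomputable def satM (n k s : ℕ) : ℕ :=
  sInf {m | ∃ G : SimpleGraph (Fin n), IsKSat G s ∧ numMatchings G k = m}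

/-- `numIndepSets G ℓ` is the number of independent sets of size `ℓ` in `G`. -/
noncomputable def numIndepSets {V : Type*} (G : SimpleGraph V) (ℓ : ℕ) : ℕ :=
  Set.ncard {t : Finset V | t.card = ℓ ∧ ∀ v ∈ t, ∀ w ∈ t, ¬ G.Adj v w}

/-- `numCliques G r` is the number of copies of `K_r` in `G`, i.e. the number of
`r`-element vertex subsets inducing a complete graph. -/
noncomputable def numCliques {V : Type*} (G : SimpleGraph V) (r : ℕ) : ℕ :=
  Set.ncard {t : Finset V | t.card = r ∧ G.IsClique (t : Set V)}

namespace Stmt15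

variable {V : Type*} [Fintype V] [DecidableEq V]

/-- The finset of `k`-matchings of `G`. -/
noncomputable def matchFinset (G : SimpleGraph V) (k : ℕ) : Finset (Finset (Sym2 V)) :=
  @Finset.filter _ (fun M => M.card = k ∧ (∀ e ∈ M, e ∈ G.edgeSet) ∧
    ∀ e ∈ M, ∀ f ∈ M, e ≠ f → ∀ v, v ∈ e → v ∉ f) (Classical.decPred _) Finset.univ

lemma mem_matchFinset {G : SimpleGraph V} {k : ℕ} {M : Finset (Sym2 V)} :
    M ∈ matchFinset G k ↔ M.card = k ∧ (∀ e ∈ M, e ∈ G.edgeSet) ∧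
      ∀ e ∈ M, ∀ f ∈ M, e ≠ f → ∀ v, v ∈ e → v ∉ f := by
  letI := Classical.decPred (fun M : Finset (Sym2 V) => M.card = k ∧ (∀ e ∈ M, e ∈ G.edgeSet) ∧
    ∀ e ∈ M, ∀ f ∈ M, e ≠ f → ∀ v, v ∈ e → v ∉ f)
  unfold matchFinset
  exact Finset.mem_filter.trans (and_iff_right (Finset.mem_univ _))

/-- Predicate for admissible sets of pairs. -/
def okPairs (Y : Finset V) (Qf : V → Finset V) (A : Finset (V × V)) : Prop :=
  (∀ p ∈ A, p.1 ∈ Y ∧ p.2 ∈ Qf p.1) ∧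
  (∀ p ∈ A, ∀ p' ∈ A, p ≠ p' → p.1 ≠ p'.1 ∧ p.2 ≠ p'.2)

noncomputable def pairMsets (Y : Finset V) (Qf : V → Finset V) (j : ℕ) :
    Finset (Finset (V × V)) :=
  @Finset.filter _ (fun A => A.card = j ∧ okPairs Y Qf A) (Classical.decPred _) Finset.univ

lemma mem_pairMsets {Y : Finset V} {Qf : V → Finset V} {j : ℕ} {A : Finset (V × V)} :
    A ∈ pairMsets Y Qf j ↔ A.card = j ∧ okPairs Y Qf A := by
  letI := Classical.decPred (fun A : Finset (V × V) => A.card = j ∧ okPairs Y Qf A)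
  unfold pairMsets
  exact Finset.mem_filter.trans (and_iff_right (Finset.mem_univ _))

lemma okPairs.card_image_fst {Y : Finset V} {Qf : V → Finset V} {A : Finset (V × V)}
    (h : okPairs Y Qf A) : (A.image Prod.fst).card = A.card := by
  apply Finset.card_image_of_injOn
  intro p hp p' hp' hf
  by_contra hne
  exact (h.2 p hp p' hp' hne).1 hf

lemma okPairs.card_image_snd {Y : Finset V} {Qf : V → Finset V} {A : Finset (V × V)}
    (h : okPairs Y Qf A) : (A.image Prod.snd).card = A.card := by
  apply Finset.card_image_of_injOn
  intro p hp p' hp' hf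
  by_contra hne
  exact (h.2 p hp p' hp' hne).2 hf

lemma insert_mem_pairMsets {Y : Finset V} {Qf : V → Finset V} {j : ℕ} {A : Finset (V × V)}
    (hA : A ∈ pairMsets Y Qf j) {y x : V}
    (hy : y ∈ Y \ A.image Prod.fst) (hx : x ∈ Qf y \ A.image Prod.snd) :
    insert (y, x) A ∈ pairMsets Y Qf (j + 1) := by
  rw [mem_pairMsets] at hA ⊢
  obtain ⟨hcard, hok⟩ := hA
  rw [Finset.mem_sdiff] at hy hx
  have hnotmem : (y, x) ∉ A := by
    intro hmem
    exact hy.2 (Finset.mem_image_of_mem Prod.fst hmem)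
  constructor
  · rw [Finset.card_insert_of_notMem hnotmem, hcard]
  constructor
  · intro p hp
    rcases Finset.mem_insert.mp hp with h | h
    · subst h; exact ⟨hy.1, hx.1⟩
    · exact hok.1 p h
  · intro p hp p' hp' hne
    rcases Finset.mem_insert.mp hp with h | h <;> rcases Finset.mem_insert.mp hp' with h' | h'
    · exact absurd (h.trans h'.symm) hne
    · subst h
      constructor
      · intro hfst
        exact hy.2 (by rw [show y = p'.1 from hfst]; exact Finset.mem_image_of_mem Prod.fst h')
      · intro hsnd
        exact hx.2 (by rw [show x = p'.2 from hsnd]; exact Finset.mem_image_of_mem Prod.snd h')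
    · subst h'
      constructor
      · intro hfst
        exact hy.2 (by rw [show y = p.1 from hfst.symm]; exact Finset.mem_image_of_mem Prod.fst h)
      · intro hsnd
        exact hx.2 (by rw [show x = p.2 from hsnd.symm]; exact Finset.mem_image_of_mem Prod.snd h)
    · exact hok.2 p h p' h' hne

/-- The number of one-pair extensions of `A` inside `F'` is at least the number of
available (vertex, partner) choices. -/
lemma card_le_extensions {F' : Finset (Finset (V × V))} {Y : Finset V} {Qf : V → Finset V}
    (A : Finset (V × V))
    (hins : ∀ y ∈ Y \ A.image Prod.fst, ∀ x ∈ Qf y \ A.image Prod.snd,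
      insert (y, x) A ∈ F') :
    ∑ y ∈ Y \ A.image Prod.fst, (Qf y \ A.image Prod.snd).card
      ≤ (F'.bipartiteAbove (· ⊆ ·) A).card := by
  classical
  set E := (Y \ A.image Prod.fst).sigma (fun y => Qf y \ A.image Prod.snd) with hE
  have hcard : E.card = ∑ y ∈ Y \ A.image Prod.fst, (Qf y \ A.image Prod.snd).card :=
    Finset.card_sigma _ _
  rw [← hcard]
  apply Finset.card_le_card_of_injOn (fun p => insert (p.1, p.2) A)
  · intro p hp
    rw [Finset.mem_coe, Finset.mem_sigma] at hp
    rw [Finset.mem_coe, Finset.mem_bipartiteAbove]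
    exact ⟨hins p.1 hp.1 p.2 hp.2, Finset.subset_insert _ _⟩
  · intro p hp p' hp' heq
    rw [Finset.mem_coe, Finset.mem_sigma] at hp hp'
    have h1 : (p.1, p.2) ∉ A := by
      intro hmem
      exact (Finset.mem_sdiff.mp hp.1).2 (Finset.mem_image_of_mem Prod.fst hmem)
    have h2 : (p'.1, p'.2) ∉ A := by
      intro hmem
      exact (Finset.mem_sdiff.mp hp'.1).2 (Finset.mem_image_of_mem Prod.fst hmem)
    have : (p.1, p.2) ∈ insert (p'.1, p'.2) A := by
      have h' : insert (p.1, p.2) A = insert (p'.1, p'.2) A := heq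
      rw [← h']; exact Finset.mem_insert_self _ _
    rcases Finset.mem_insert.mp this with h | h
    · obtain ⟨ha, hb⟩ := Prod.ext_iff.mp h
      exact Sigma.ext ha (heq_of_eq hb)
    · exact absurd h h1

/-- Any `(j+1)`-set has at most `j+1` subsets belonging to a family of `j`-sets. -/
lemma fiber_le {α : Type*} [DecidableEq α] {F : Finset (Finset α)} {j : ℕ}
    (hF : ∀ A ∈ F, A.card = j) {M : Finset α} (hM : M.card = j + 1) :
    (F.bipartiteBelow (· ⊆ ·) M).card ≤ j + 1 := by
  have hsub : F.bipartiteBelow (· ⊆ ·) M ⊆ M.image (fun a => M.erase a) := by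
    intro A hA
    rw [Finset.mem_bipartiteBelow] at hA
    obtain ⟨hAF, hAM⟩ := hA
    have hcard : (M \ A).card = 1 := by
      rw [Finset.card_sdiff_of_subset hAM, hM, hF A hAF]; omega
    obtain ⟨a, ha⟩ := Finset.card_eq_one.mp hcard
    have haM : a ∈ M := by
      have : a ∈ M \ A := ha ▸ Finset.mem_singleton_self a
      exact (Finset.mem_sdiff.mp this).1
    have haA : a ∉ A := by
      have : a ∈ M \ A := ha ▸ Finset.mem_singleton_self a
      exact (Finset.mem_sdiff.mp this).2
    have : A = M.erase a := by
      apply Finset.eq_of_subset_of_card_le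
      · intro x hx
        rw [Finset.mem_erase]
        refine ⟨fun hxa => haA (hxa ▸ hx), hAM hx⟩
      · rw [Finset.card_erase_of_mem haM, hM, hF A hAF]; omega
    rw [this]
    exact Finset.mem_image_of_mem _ haM
  calc (F.bipartiteBelow (· ⊆ ·) M).card ≤ (M.image (fun a => M.erase a)).card :=
        Finset.card_le_card hsub
    _ ≤ M.card := Finset.card_image_le
    _ = j + 1 := hM

lemma base_ext_bound {Y : Finset V} {Qf : V → Finset V} {q j : ℕ}
    (hq : ∀ y ∈ Y, q ≤ (Qf y).card) {A : Finset (V × V)} (hA : A ∈ pairMsets Y Qf j) :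
    (Y.card - j) * (q - j) ≤ ∑ y ∈ Y \ A.image Prod.fst, (Qf y \ A.image Prod.snd).card := by
  obtain ⟨hcard, hok⟩ := mem_pairMsets.mp hA
  have hfst : (A.image Prod.fst).card ≤ j := le_of_le_of_eq Finset.card_image_le hcard
  have hsnd : (A.image Prod.snd).card ≤ j := le_of_le_of_eq Finset.card_image_le hcard
  have hterm : ∀ y ∈ Y \ A.image Prod.fst, q - j ≤ (Qf y \ A.image Prod.snd).card := by
    intro y hy
    have h1 := Finset.le_card_sdiff (A.image Prod.snd) (Qf y)
    have h2 := hq y (Finset.mem_sdiff.mp hy).1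
    omega
  calc (Y.card - j) * (q - j)
      ≤ (Y \ A.image Prod.fst).card * (q - j) := by
        apply Nat.mul_le_mul_right
        have h1 := Finset.le_card_sdiff (A.image Prod.fst) Y
        omega
    _ = (Y \ A.image Prod.fst).card • (q - j) := by rw [smul_eq_mul]
    _ ≤ ∑ y ∈ Y \ A.image Prod.fst, (Qf y \ A.image Prod.snd).card :=
        Finset.card_nsmul_le_sum _ _ _ hterm

lemma succ_general {F F' : Finset (Finset (V × V))} {Y : Finset V} {Qf : V → Finset V} {q j : ℕ}
    (hq : ∀ y ∈ Y, q ≤ (Qf y).card)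
    (hF : ∀ A ∈ F, A ∈ pairMsets Y Qf j)
    (hF' : ∀ M ∈ F', M.card = j + 1)
    (hins : ∀ A ∈ F, ∀ y ∈ Y \ A.image Prod.fst, ∀ x ∈ Qf y \ A.image Prod.snd,
      insert (y, x) A ∈ F') :
    F.card * ((Y.card - j) * (q - j)) ≤ F'.card * (j + 1) := by
  classical
  apply Finset.card_mul_le_card_mul (· ⊆ ·)
  · intro A hA
    exact le_trans (base_ext_bound hq (hF A hA)) (card_le_extensions A (hins A hA))
  · intro M hM
    exact fiber_le (fun A hA => (mem_pairMsets.mp (hF A hA)).1) (hF' M hM)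

lemma empty_mem_pairMsets {Y : Finset V} {Qf : V → Finset V} :
    (∅ : Finset (V × V)) ∈ pairMsets Y Qf 0 := by
  rw [mem_pairMsets]
  refine ⟨Finset.card_empty, ?_, ?_⟩ <;> intro p hp <;> simp at hp

lemma pairMsets_card_lower {Y : Finset V} {Qf : V → Finset V} {q : ℕ}
    (hq : ∀ y ∈ Y, q ≤ (Qf y).card) :
    ∀ j, Y.card.descFactorial j * q.descFactorial j ≤ (pairMsets Y Qf j).card * j.factorial := by
  intro j
  induction j with
  | zero =>
    simp only [Nat.descFactorial_zero, Nat.factorial_zero, one_mul, mul_one]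
    exact Finset.card_pos.mpr ⟨∅, empty_mem_pairMsets⟩
  | succ j IH =>
    have step : (pairMsets Y Qf j).card * ((Y.card - j) * (q - j))
        ≤ (pairMsets Y Qf (j+1)).card * (j + 1) :=
      succ_general hq (fun A hA => hA) (fun M hM => (mem_pairMsets.mp hM).1)
        (fun A hA y hy x hx => insert_mem_pairMsets hA hy hx)
    calc Y.card.descFactorial (j+1) * q.descFactorial (j+1)
        = (Y.card.descFactorial j * q.descFactorial j) * ((Y.card - j) * (q - j)) := by
          rw [Nat.descFactorial_succ, Nat.descFactorial_succ]; ring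
      _ ≤ ((pairMsets Y Qf j).card * j.factorial) * ((Y.card - j) * (q - j)) :=
          Nat.mul_le_mul_right _ IH
      _ = ((pairMsets Y Qf j).card * ((Y.card - j) * (q - j))) * j.factorial := by ring
      _ ≤ ((pairMsets Y Qf (j+1)).card * (j + 1)) * j.factorial :=
          Nat.mul_le_mul_right _ step
      _ = (pairMsets Y Qf (j+1)).card * (j+1).factorial := by
          rw [Nat.factorial_succ]; ring

noncomputable def gpairMsets (Y₁ : Finset V) (Qf : V → Finset V) (x0 : V) (j : ℕ) :
    Finset (Finset (V × V)) :=
  (pairMsets Y₁ Qf j).filter (fun A => x0 ∈ A.image Prod.snd)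

lemma mem_gpairMsets {Y₁ : Finset V} {Qf : V → Finset V} {x0 : V} {j : ℕ} {A : Finset (V × V)} :
    A ∈ gpairMsets Y₁ Qf x0 j ↔ A ∈ pairMsets Y₁ Qf j ∧ x0 ∈ A.image Prod.snd :=
  Finset.mem_filter

lemma gpairMsets_subset {Y₁ : Finset V} {Qf : V → Finset V} {x0 : V} {j : ℕ} :
    gpairMsets Y₁ Qf x0 j ⊆ pairMsets Y₁ Qf j := Finset.filter_subset _ _

lemma pairMsets_mono {Y₁ Y : Finset V} {Qf : V → Finset V} {j : ℕ} (hYY : Y₁ ⊆ Y) :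
    pairMsets Y₁ Qf j ⊆ pairMsets Y Qf j := by
  intro A hA
  obtain ⟨hcard, hok⟩ := mem_pairMsets.mp hA
  exact mem_pairMsets.mpr ⟨hcard, fun p hp => ⟨hYY (hok.1 p hp).1, (hok.1 p hp).2⟩, hok.2⟩

lemma insert_mem_gpairMsets {Y₁ : Finset V} {Qf : V → Finset V} {x0 : V} {j : ℕ}
    {A : Finset (V × V)} (hA : A ∈ gpairMsets Y₁ Qf x0 j) {y x : V}
    (hy : y ∈ Y₁ \ A.image Prod.fst) (hx : x ∈ Qf y \ A.image Prod.snd) :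
    insert (y, x) A ∈ gpairMsets Y₁ Qf x0 (j + 1) := by
  obtain ⟨hA1, hA2⟩ := mem_gpairMsets.mp hA
  refine mem_gpairMsets.mpr ⟨insert_mem_pairMsets hA1 hy hx, ?_⟩
  rw [Finset.image_insert]
  exact Finset.mem_insert_of_mem hA2

lemma gpairMsets_one {Y₁ : Finset V} {Qf : V → Finset V} {x0 : V}
    (hx0 : ∀ y ∈ Y₁, x0 ∈ Qf y) :
    Y₁.card ≤ (gpairMsets Y₁ Qf x0 1).card := by
  apply Finset.card_le_card_of_injOn (fun y => ({(y, x0)} : Finset (V × V)))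
  · intro y hy
    refine mem_gpairMsets.mpr ⟨mem_pairMsets.mpr ⟨Finset.card_singleton _, ?_, ?_⟩, ?_⟩
    · intro p hp
      rw [Finset.mem_singleton] at hp
      subst hp
      exact ⟨hy, hx0 y hy⟩
    · intro p hp p' hp' hne
      rw [Finset.mem_singleton] at hp hp'
      exact absurd (hp.trans hp'.symm) hne
    · rw [Finset.image_singleton]
      exact Finset.mem_singleton_self _
  · intro y _ y' _ heq
    have : (y, x0) ∈ ({(y', x0)} : Finset (V × V)) := by
      have h' : ({(y, x0)} : Finset (V × V)) = {(y', x0)} := heq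
      rw [← h']; exact Finset.mem_singleton_self _
    rw [Finset.mem_singleton] at this
    exact (Prod.ext_iff.mp this).1

lemma gpairMsets_lower {Y₁ : Finset V} {Qf : V → Finset V} {x0 : V} {q k : ℕ}
    (hq : ∀ y ∈ Y₁, q ≤ (Qf y).card) (hx0 : ∀ y ∈ Y₁, x0 ∈ Qf y)
    (hk3 : 3 ≤ k) (hkq : k ≤ q) :
    ∀ i, i + 1 ≤ k - 1 →
      Y₁.card * ((Y₁.card - k) * (q + 2 - k)) ^ i
        ≤ (gpairMsets Y₁ Qf x0 (i + 1)).card * (i + 1).factorial := by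
  intro i
  induction i with
  | zero =>
    intro _
    simpa using gpairMsets_one hx0
  | succ i IH =>
    intro hik
    have IH' := IH (by omega)
    have step : (gpairMsets Y₁ Qf x0 (i+1)).card * ((Y₁.card - (i+1)) * (q - (i+1)))
        ≤ (gpairMsets Y₁ Qf x0 (i+2)).card * ((i+1) + 1) :=
      succ_general hq (fun A hA => gpairMsets_subset hA)
        (fun M hM => (mem_pairMsets.mp (gpairMsets_subset hM)).1)
        (fun A hA y hy x hx => insert_mem_gpairMsets hA hy hx)
    have hC : (Y₁.card - k) * (q + 2 - k) ≤ (Y₁.card - (i+1)) * (q - (i+1)) := by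
      apply Nat.mul_le_mul <;> omega
    calc Y₁.card * ((Y₁.card - k) * (q + 2 - k)) ^ (i+1)
        = (Y₁.card * ((Y₁.card - k) * (q + 2 - k)) ^ i) * ((Y₁.card - k) * (q + 2 - k)) := by
          ring
      _ ≤ ((gpairMsets Y₁ Qf x0 (i+1)).card * (i+1).factorial) * ((Y₁.card - k) * (q + 2 - k)) :=
          Nat.mul_le_mul_right _ IH'
      _ ≤ ((gpairMsets Y₁ Qf x0 (i+1)).card * (i+1).factorial)
            * ((Y₁.card - (i+1)) * (q - (i+1))) := Nat.mul_le_mul_left _ hC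
      _ = ((gpairMsets Y₁ Qf x0 (i+1)).card * ((Y₁.card - (i+1)) * (q - (i+1))))
            * (i+1).factorial := by ring
      _ ≤ ((gpairMsets Y₁ Qf x0 (i+2)).card * ((i+1) + 1)) * (i+1).factorial :=
          Nat.mul_le_mul_right _ step
      _ = (gpairMsets Y₁ Qf x0 (i+2)).card * (i+2).factorial := by
          rw [show (i+2).factorial = ((i+1)+1) * (i+1).factorial from rfl]; ring

lemma refined_ext_bound {Y Y₁ Y₂ : Finset V} {Qf : V → Finset V} {x0 : V} {q t : ℕ}
    (hq : ∀ y ∈ Y, q ≤ (Qf y).card) (hY₁ : Y₁ ⊆ Y) (hY₂ : Y₂ ⊆ Y)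
    (hdisj : ∀ y ∈ Y₂, y ∉ Y₁) (hx0 : ∀ y ∈ Y₂, x0 ∉ Qf y)
    (ht : 1 ≤ t) (htq : t ≤ q)
    {A : Finset (V × V)} (hA : A ∈ gpairMsets Y₁ Qf x0 t) :
    (Y.card - t) * (q - t) + Y₂.card
      ≤ ∑ y ∈ Y \ A.image Prod.fst, (Qf y \ A.image Prod.snd).card := by
  obtain ⟨hA1, hsnd0⟩ := mem_gpairMsets.mp hA
  obtain ⟨hcard, hok⟩ := mem_pairMsets.mp hA1
  have hfstY₁ : A.image Prod.fst ⊆ Y₁ := by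
    intro z hz
    obtain ⟨p, hp, hpz⟩ := Finset.mem_image.mp hz
    exact hpz ▸ (hok.1 p hp).1
  have hfstcard : (A.image Prod.fst).card = t := hok.card_image_fst.trans hcard
  have hsndcard : (A.image Prod.snd).card = t := hok.card_image_snd.trans hcard
  have hY₂sub : Y₂ ⊆ Y \ A.image Prod.fst := by
    intro y hy
    rw [Finset.mem_sdiff]
    exact ⟨hY₂ hy, fun hmem => hdisj y hy (hfstY₁ hmem)⟩
  have hYfst : (Y \ A.image Prod.fst).card = Y.card - t := by
    rw [Finset.card_sdiff_of_subset (hfstY₁.trans hY₁), hfstcard]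
  have hsplit := Finset.sum_sdiff (f := fun y => (Qf y \ A.image Prod.snd).card) hY₂sub
  have hterm2 : ∀ y ∈ Y₂, (q - t) + 1 ≤ (Qf y \ A.image Prod.snd).card := by
    intro y hy
    have h1 := Finset.card_sdiff_add_card_inter (Qf y) (A.image Prod.snd)
    have h2 : Qf y ∩ A.image Prod.snd ⊆ (A.image Prod.snd).erase x0 := by
      intro z hz
      rw [Finset.mem_inter] at hz
      rw [Finset.mem_erase]
      exact ⟨fun hzx => hx0 y hy (hzx ▸ hz.1), hz.2⟩
    have h3 : (Qf y ∩ A.image Prod.snd).card ≤ t - 1 := by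
      calc (Qf y ∩ A.image Prod.snd).card ≤ ((A.image Prod.snd).erase x0).card :=
            Finset.card_le_card h2
        _ = t - 1 := by rw [Finset.card_erase_of_mem hsnd0, hsndcard]
    have h4 := hq y (hY₂ hy)
    omega
  have hterm1 : ∀ y ∈ (Y \ A.image Prod.fst) \ Y₂, q - t ≤ (Qf y \ A.image Prod.snd).card := by
    intro y hy
    have hyY : y ∈ Y := (Finset.mem_sdiff.mp (Finset.mem_sdiff.mp hy).1).1
    have h1 := Finset.le_card_sdiff (A.image Prod.snd) (Qf y)
    have h2 := hq y hyY
    have h3 : (A.image Prod.snd).card ≤ t := hsndcard.le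
    omega
  have hrest : ((Y \ A.image Prod.fst) \ Y₂).card = (Y.card - t) - Y₂.card := by
    rw [Finset.card_sdiff_of_subset hY₂sub, hYfst]
  have hs2 : Y₂.card * ((q - t) + 1) ≤ ∑ y ∈ Y₂, (Qf y \ A.image Prod.snd).card := by
    rw [← smul_eq_mul]
    exact Finset.card_nsmul_le_sum _ _ _ hterm2
  have hs1 : ((Y.card - t) - Y₂.card) * (q - t)
      ≤ ∑ y ∈ (Y \ A.image Prod.fst) \ Y₂, (Qf y \ A.image Prod.snd).card := by
    rw [← hrest, ← smul_eq_mul]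
    exact Finset.card_nsmul_le_sum _ _ _ hterm1
  have hble : Y₂.card ≤ Y.card - t := by
    rw [← hYfst]
    exact Finset.card_le_card hY₂sub
  rw [← hsplit]
  have harith : (Y.card - t) * (q - t) + Y₂.card
      ≤ ((Y.card - t) - Y₂.card) * (q - t) + Y₂.card * ((q - t) + 1) := by
    have e1 : ((Y.card - t) - Y₂.card) * (q - t) = (Y.card - t) * (q - t) - Y₂.card * (q - t) :=
      Nat.sub_mul _ _ _
    have e2 : Y₂.card * ((q - t) + 1) = Y₂.card * (q - t) + Y₂.card := by ring
    have e3 : Y₂.card * (q - t) ≤ (Y.card - t) * (q - t) := Nat.mul_le_mul_right _ hble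
    omega
  exact le_trans harith (Nat.add_le_add hs1 hs2)

lemma surplus_step {Y Y₁ Y₂ : Finset V} {Qf : V → Finset V} {x0 : V} {q t : ℕ}
    (hq : ∀ y ∈ Y, q ≤ (Qf y).card) (hY₁ : Y₁ ⊆ Y) (hY₂ : Y₂ ⊆ Y)
    (hdisj : ∀ y ∈ Y₂, y ∉ Y₁) (hx0 : ∀ y ∈ Y₂, x0 ∉ Qf y)
    (ht : 1 ≤ t) (htq : t ≤ q) :
    (pairMsets Y Qf t).card * ((Y.card - t) * (q - t))
        + (gpairMsets Y₁ Qf x0 t).card * Y₂.card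
      ≤ (pairMsets Y Qf (t + 1)).card * (t + 1) := by
  classical
  have hFgb : gpairMsets Y₁ Qf x0 t ⊆ pairMsets Y Qf t :=
    fun A hA => pairMsets_mono hY₁ (gpairMsets_subset hA)
  have h1 : ∀ A ∈ pairMsets Y Qf t,
      (Y.card - t) * (q - t) ≤ ((pairMsets Y Qf (t+1)).bipartiteAbove (· ⊆ ·) A).card :=
    fun A hA => le_trans (base_ext_bound hq hA)
      (card_le_extensions A (fun y hy x hx => insert_mem_pairMsets hA hy hx))
  have h2 : ∀ A ∈ gpairMsets Y₁ Qf x0 t,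
      (Y.card - t) * (q - t) + Y₂.card
        ≤ ((pairMsets Y Qf (t+1)).bipartiteAbove (· ⊆ ·) A).card := by
    intro A hA
    exact le_trans (refined_ext_bound hq hY₁ hY₂ hdisj hx0 ht htq hA)
      (card_le_extensions A (fun y hy x hx => insert_mem_pairMsets (hFgb hA) hy hx))
  have hupper : ∑ A ∈ pairMsets Y Qf t, ((pairMsets Y Qf (t+1)).bipartiteAbove (· ⊆ ·) A).card
      ≤ (pairMsets Y Qf (t+1)).card * (t + 1) := by
    rw [Finset.sum_card_bipartiteAbove_eq_sum_card_bipartiteBelow]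
    calc ∑ M ∈ pairMsets Y Qf (t+1), ((pairMsets Y Qf t).bipartiteBelow (· ⊆ ·) M).card
        ≤ ∑ _M ∈ pairMsets Y Qf (t+1), (t + 1) :=
          Finset.sum_le_sum (fun M hM =>
            fiber_le (fun A hA => (mem_pairMsets.mp hA).1) ((mem_pairMsets.mp hM).1))
      _ = (pairMsets Y Qf (t+1)).card * (t + 1) := by
          rw [Finset.sum_const, smul_eq_mul]
  have hlow : (pairMsets Y Qf t).card * ((Y.card - t) * (q - t))
      + (gpairMsets Y₁ Qf x0 t).card * Y₂.card
      ≤ ∑ A ∈ pairMsets Y Qf t, ((pairMsets Y Qf (t+1)).bipartiteAbove (· ⊆ ·) A).card := by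
    rw [← Finset.sum_sdiff hFgb]
    have hs1 : (pairMsets Y Qf t \ gpairMsets Y₁ Qf x0 t).card * ((Y.card - t) * (q - t))
        ≤ ∑ A ∈ pairMsets Y Qf t \ gpairMsets Y₁ Qf x0 t,
            ((pairMsets Y Qf (t+1)).bipartiteAbove (· ⊆ ·) A).card := by
      rw [← smul_eq_mul]
      exact Finset.card_nsmul_le_sum _ _ _ (fun A hA => h1 A (Finset.mem_sdiff.mp hA).1)
    have hs2 : (gpairMsets Y₁ Qf x0 t).card * ((Y.card - t) * (q - t) + Y₂.card)
        ≤ ∑ A ∈ gpairMsets Y₁ Qf x0 t,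
            ((pairMsets Y Qf (t+1)).bipartiteAbove (· ⊆ ·) A).card := by
      rw [← smul_eq_mul]
      exact Finset.card_nsmul_le_sum _ _ _ h2
    have e1 : (pairMsets Y Qf t \ gpairMsets Y₁ Qf x0 t).card
        = (pairMsets Y Qf t).card - (gpairMsets Y₁ Qf x0 t).card :=
      Finset.card_sdiff_of_subset hFgb
    have e2 : (gpairMsets Y₁ Qf x0 t).card ≤ (pairMsets Y Qf t).card :=
      Finset.card_le_card hFgb
    have e3 : ((pairMsets Y Qf t).card - (gpairMsets Y₁ Qf x0 t).card) * ((Y.card - t) * (q - t))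
        = (pairMsets Y Qf t).card * ((Y.card - t) * (q - t))
          - (gpairMsets Y₁ Qf x0 t).card * ((Y.card - t) * (q - t)) := Nat.sub_mul _ _ _
    have e4 : (gpairMsets Y₁ Qf x0 t).card * ((Y.card - t) * (q - t))
        ≤ (pairMsets Y Qf t).card * ((Y.card - t) * (q - t)) := Nat.mul_le_mul_right _ e2
    have e5 : (gpairMsets Y₁ Qf x0 t).card * ((Y.card - t) * (q - t) + Y₂.card)
        = (gpairMsets Y₁ Qf x0 t).card * ((Y.card - t) * (q - t))
          + (gpairMsets Y₁ Qf x0 t).card * Y₂.card := by ring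
    calc (pairMsets Y Qf t).card * ((Y.card - t) * (q - t))
          + (gpairMsets Y₁ Qf x0 t).card * Y₂.card
        ≤ (pairMsets Y Qf t \ gpairMsets Y₁ Qf x0 t).card * ((Y.card - t) * (q - t))
          + (gpairMsets Y₁ Qf x0 t).card * ((Y.card - t) * (q - t) + Y₂.card) := by
          rw [e1, e3, e5]; omega
      _ ≤ _ := Nat.add_le_add hs1 hs2
  exact le_trans hlow hupper

lemma sym2_exists_rep {α : Type*} (e : Sym2 α) : ∃ a b, e = s(a, b) := by
  induction e using Sym2.ind with
  | _ a b => exact ⟨a, b, rfl⟩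

lemma sym2_mem_exists {α : Type*} {v : α} {e : Sym2 α} (h : v ∈ e) : ∃ w, e = s(v, w) := by
  induction e using Sym2.ind with
  | _ a b =>
    rw [Sym2.mem_iff] at h
    rcases h with rfl | rfl
    · exact ⟨b, rfl⟩
    · exact ⟨a, Sym2.eq_swap.symm⟩

lemma sym2_mk_inf_sup {α : Type*} [LinearOrder α] (e : Sym2 α) : s(e.inf, e.sup) = e := by
  induction e using Sym2.ind with
  | _ a b =>
    rw [Sym2.inf_mk, Sym2.sup_mk]
    rcases le_total a b with h | h
    · rw [inf_eq_left.mpr h, sup_eq_right.mpr h]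
    · rw [inf_eq_right.mpr h, sup_eq_left.mpr h]
      exact Sym2.eq_swap

lemma sym2_inf_mem {α : Type*} [LinearOrder α] (e : Sym2 α) : e.inf ∈ e := by
  induction e using Sym2.ind with
  | _ a b =>
    rw [Sym2.inf_mk, Sym2.mem_iff]
    rcases le_total a b with h | h
    · exact Or.inl (inf_eq_left.mpr h)
    · exact Or.inr (inf_eq_right.mpr h)

lemma sym2_sup_mem {α : Type*} [LinearOrder α] (e : Sym2 α) : e.sup ∈ e := by
  induction e using Sym2.ind with
  | _ a b =>
    rw [Sym2.sup_mk, Sym2.mem_iff]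
    rcases le_total a b with h | h
    · exact Or.inr (sup_eq_right.mpr h)
    · exact Or.inl (sup_eq_left.mpr h)

lemma numMatchings_eq (G : SimpleGraph V) (k : ℕ) :
    numMatchings G k = (matchFinset G k).card := by
  rw [numMatchings, ← Set.ncard_coe_finset]
  congr 1
  ext M
  rw [Set.mem_setOf_eq, Finset.mem_coe, mem_matchFinset]

lemma pairMsets_card_le_matchFinset {G : SimpleGraph V} {Y : Finset V} {Qf : V → Finset V}
    {k : ℕ} (hadj : ∀ y ∈ Y, ∀ x ∈ Qf y, G.Adj y x)
    (hout : ∀ y ∈ Y, ∀ x ∈ Qf y, x ∉ Y) :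
    (pairMsets Y Qf k).card ≤ (matchFinset G k).card := by
  have key : ∀ {A B : Finset (V × V)}, A ∈ pairMsets Y Qf k → B ∈ pairMsets Y Qf k →
      A.image (fun p => s(p.1, p.2)) = B.image (fun p => s(p.1, p.2)) → A ⊆ B := by
    intro A B hA hB heq p hp
    have h1 : s(p.1, p.2) ∈ B.image (fun p => s(p.1, p.2)) := by
      rw [← heq]
      exact Finset.mem_image_of_mem _ hp
    obtain ⟨p', hp', hpe⟩ := Finset.mem_image.mp h1
    rw [Sym2.eq_iff] at hpe
    rcases hpe with ⟨h1', h2'⟩ | ⟨h1', h2'⟩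
    · have : p' = p := Prod.ext h1' h2'
      exact this ▸ hp'
    · exfalso
      obtain ⟨hcA, hokA⟩ := mem_pairMsets.mp hA
      obtain ⟨hcB, hokB⟩ := mem_pairMsets.mp hB
      have hy' : p'.1 ∈ Y := (hokB.1 p' hp').1
      have hx : p.2 ∈ Qf p.1 := (hokA.1 p hp).2
      have hyA : p.1 ∈ Y := (hokA.1 p hp).1
      exact hout p.1 hyA p.2 hx (h1' ▸ hy')
  apply Finset.card_le_card_of_injOn (fun A => A.image (fun p => s(p.1, p.2)))
  · intro A hA'
    have hA := Finset.mem_coe.mp hA'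
    obtain ⟨hcard, hok⟩ := mem_pairMsets.mp hA
    have hinj : Set.InjOn (fun p : V × V => s(p.1, p.2)) A := by
      intro p hp p' hp' heq
      have heq' : s(p.1, p.2) = s(p'.1, p'.2) := heq
      rw [Sym2.eq_iff] at heq'
      rcases heq' with ⟨h1, h2⟩ | ⟨h1, h2⟩
      · exact Prod.ext h1 h2
      · exfalso
        have hy : p.1 ∈ Y := (hok.1 p (Finset.mem_coe.mp hp)).1
        have hx : p'.2 ∈ Qf p'.1 := (hok.1 p' (Finset.mem_coe.mp hp')).2
        have hy' : p'.1 ∈ Y := (hok.1 p' (Finset.mem_coe.mp hp')).1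
        exact hout p'.1 hy' p'.2 hx (h1 ▸ hy)
    rw [Finset.mem_coe, mem_matchFinset]
    refine ⟨?_, ?_, ?_⟩
    · rw [Finset.card_image_of_injOn hinj, hcard]
    · intro e he
      obtain ⟨p, hp, rfl⟩ := Finset.mem_image.mp he
      exact (SimpleGraph.mem_edgeSet G).mpr (hadj p.1 (hok.1 p hp).1 p.2 (hok.1 p hp).2)
    · intro e he f hf hef v hv hvf
      obtain ⟨p, hp, rfl⟩ := Finset.mem_image.mp he
      obtain ⟨p', hp', rfl⟩ := Finset.mem_image.mp hf
      have hne : p ≠ p' := fun h => hef (by rw [h])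
      obtain ⟨hf1, hf2⟩ := hok.2 p hp p' hp' hne
      have hY1 : p.1 ∈ Y := (hok.1 p hp).1
      have hQ2 : p.2 ∈ Qf p.1 := (hok.1 p hp).2
      have hY1' : p'.1 ∈ Y := (hok.1 p' hp').1
      have hQ2' : p'.2 ∈ Qf p'.1 := (hok.1 p' hp').2
      rw [Sym2.mem_iff] at hv hvf
      rcases hv with h | h <;> rcases hvf with h' | h'
      · exact hf1 (h.symm.trans h')
      · exact hout p'.1 hY1' p'.2 hQ2' (h' ▸ h ▸ hY1)
      · exact hout p.1 hY1 p.2 hQ2 (h ▸ h' ▸ hY1')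
      · exact hf2 (h.symm.trans h')
  · intro A hA B hB heq
    have heq' : A.image (fun p => s(p.1, p.2)) = B.image (fun p => s(p.1, p.2)) := heq
    exact Finset.Subset.antisymm (key (Finset.mem_coe.mp hA) (Finset.mem_coe.mp hB) heq')
      (key (Finset.mem_coe.mp hB) (Finset.mem_coe.mp hA) heq'.symm)

/-- Families of pair sets with first coordinates in `W`, used for upper bounds. -/
noncomputable def xsets (W : Finset V) (j : ℕ) : Finset (Finset (V × V)) :=
  @Finset.filter _ (fun A => A.card = j ∧ (∀ p ∈ A, p.1 ∈ W) ∧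
    (∀ p ∈ A, ∀ p' ∈ A, p ≠ p' → p.1 ≠ p'.1 ∧ p.2 ≠ p'.2)) (Classical.decPred _) Finset.univ

lemma mem_xsets {W : Finset V} {j : ℕ} {A : Finset (V × V)} :
    A ∈ xsets W j ↔ A.card = j ∧ (∀ p ∈ A, p.1 ∈ W) ∧
      (∀ p ∈ A, ∀ p' ∈ A, p ≠ p' → p.1 ≠ p'.1 ∧ p.2 ≠ p'.2) := by
  letI := Classical.decPred (fun A : Finset (V × V) => A.card = j ∧ (∀ p ∈ A, p.1 ∈ W) ∧
    (∀ p ∈ A, ∀ p' ∈ A, p ≠ p' → p.1 ≠ p'.1 ∧ p.2 ≠ p'.2))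
  unfold xsets
  exact Finset.mem_filter.trans (and_iff_right (Finset.mem_univ _))

lemma xsets_zero {W : Finset V} : (xsets W 0).card ≤ 1 := by
  apply Finset.card_le_one.mpr
  intro A hA B hB
  have h1 : A = ∅ := Finset.card_eq_zero.mp (mem_xsets.mp hA).1
  have h2 : B = ∅ := Finset.card_eq_zero.mp (mem_xsets.mp hB).1
  rw [h1, h2]

lemma xsets_succ {W : Finset V} (j : ℕ) :
    (xsets W (j + 1)).card * (j + 1)
      ≤ (xsets W j).card * ((W.card - j) * (Fintype.card V - j)) := by
  classical
  apply Finset.card_mul_le_card_mul (fun M A => A ⊆ M)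
  · intro M hM
    obtain ⟨hcard, hfst, hdist⟩ := mem_xsets.mp hM
    have hsub : M.powersetCard j ⊆ (xsets W j).bipartiteAbove (fun M A => A ⊆ M) M := by
      intro A hA
      obtain ⟨hAM, hAcard⟩ := Finset.mem_powersetCard.mp hA
      rw [Finset.mem_bipartiteAbove]
      refine ⟨mem_xsets.mpr ⟨hAcard, fun p hp => hfst p (hAM hp),
        fun p hp p' hp' hne => hdist p (hAM hp) p' (hAM hp') hne⟩, hAM⟩
    calc j + 1 = (M.powersetCard j).card := by
          rw [Finset.card_powersetCard, hcard, Nat.choose_succ_self_right]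
      _ ≤ _ := Finset.card_le_card hsub
  · intro A hA
    obtain ⟨hcard, hfst, hdist⟩ := mem_xsets.mp hA
    have hfstsub : A.image Prod.fst ⊆ W := by
      intro z hz
      obtain ⟨p, hp, rfl⟩ := Finset.mem_image.mp hz
      exact hfst p hp
    have hfstcard : (A.image Prod.fst).card = j := by
      rw [← hcard]
      apply Finset.card_image_of_injOn
      intro p hp p' hp' hf
      by_contra hne
      exact (hdist p hp p' hp' hne).1 hf
    have hsndcard : (A.image Prod.snd).card = j := by
      rw [← hcard]
      apply Finset.card_image_of_injOn
      intro p hp p' hp' hf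
      by_contra hne
      exact (hdist p hp p' hp' hne).2 hf
    have htarget : ((W \ A.image Prod.fst) ×ˢ ((Finset.univ : Finset V) \ A.image Prod.snd)).card
        = (W.card - j) * (Fintype.card V - j) := by
      rw [Finset.card_product, Finset.card_sdiff_of_subset hfstsub,
        Finset.card_sdiff_of_subset (Finset.subset_univ _), hfstcard, hsndcard, Finset.card_univ]
    rw [← htarget]
    apply Finset.card_le_card_of_forall_subsingleton
      (fun M p => M = insert p A)
    · intro M hM
      rw [Finset.mem_bipartiteBelow] at hM
      obtain ⟨hMx, hAM⟩ := hM
      obtain ⟨hMcard, hMfst, hMdist⟩ := mem_xsets.mp hMx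
      have hone : (M \ A).card = 1 := by
        rw [Finset.card_sdiff_of_subset hAM, hMcard, hcard]; omega
      obtain ⟨p, hp⟩ := Finset.card_eq_one.mp hone
      have hpM : p ∈ M ∧ p ∉ A := by
        have : p ∈ M \ A := hp ▸ Finset.mem_singleton_self p
        exact Finset.mem_sdiff.mp this
      refine ⟨p, ?_, ?_⟩
      · rw [Finset.mem_product, Finset.mem_sdiff, Finset.mem_sdiff]
        refine ⟨⟨hMfst p hpM.1, ?_⟩, Finset.mem_univ _, ?_⟩
        · intro hmem
          obtain ⟨p', hp', hpe⟩ := Finset.mem_image.mp hmem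
          have hne : p ≠ p' := fun h => hpM.2 (h ▸ hp')
          exact (hMdist p hpM.1 p' (hAM hp') hne).1 hpe.symm
        · intro hmem
          obtain ⟨p', hp', hpe⟩ := Finset.mem_image.mp hmem
          have hne : p ≠ p' := fun h => hpM.2 (h ▸ hp')
          exact (hMdist p hpM.1 p' (hAM hp') hne).2 hpe.symm
      · apply Finset.Subset.antisymm
        · intro x hx
          by_cases hxA : x ∈ A
          · exact Finset.mem_insert_of_mem hxA
          · have hx' : x ∈ M \ A := Finset.mem_sdiff.mpr ⟨hx, hxA⟩
            rw [hp, Finset.mem_singleton] at hx'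
            rw [hx']
            exact Finset.mem_insert_self _ _
        · intro x hx
          rcases Finset.mem_insert.mp hx with rfl | h
          · exact hpM.1
          · exact hAM h
    · intro p _ M hM M' hM'
      have h1 : M = insert p A := hM.2
      have h2 : M' = insert p A := hM'.2
      rw [h1, h2]

lemma xsets_bound {W : Finset V} :
    ∀ j, (xsets W j).card * j.factorial
      ≤ W.card.descFactorial j * (Fintype.card V).descFactorial j := by
  intro j
  induction j with
  | zero =>
    simpa using xsets_zero
  | succ j IH =>
    calc (xsets W (j+1)).card * (j+1).factorial
        = ((xsets W (j+1)).card * (j+1)) * j.factorial := by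
          rw [Nat.factorial_succ]; ring
      _ ≤ ((xsets W j).card * ((W.card - j) * (Fintype.card V - j))) * j.factorial :=
          Nat.mul_le_mul_right _ (xsets_succ j)
      _ = ((xsets W j).card * j.factorial) * ((W.card - j) * (Fintype.card V - j)) := by ring
      _ ≤ (W.card.descFactorial j * (Fintype.card V).descFactorial j)
            * ((W.card - j) * (Fintype.card V - j)) := Nat.mul_le_mul_right _ IH
      _ = W.card.descFactorial (j+1) * (Fintype.card V).descFactorial (j+1) := by
          rw [Nat.descFactorial_succ, Nat.descFactorial_succ]; ring

lemma filter_lt_card_le (n q : ℕ) :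
    ((Finset.univ : Finset (Fin n)).filter (fun w : Fin n => (w : ℕ) < q)).card ≤ q := by
  have himg : ((Finset.univ : Finset (Fin n)).filter (fun w : Fin n => (w : ℕ) < q)).image Fin.val
      ⊆ Finset.range q := by
    intro i hi
    obtain ⟨w, hw, rfl⟩ := Finset.mem_image.mp hi
    exact Finset.mem_range.mpr (Finset.mem_filter.mp hw).2
  calc ((Finset.univ : Finset (Fin n)).filter (fun w : Fin n => (w : ℕ) < q)).card
      = (((Finset.univ : Finset (Fin n)).filter (fun w : Fin n => (w : ℕ) < q)).image Fin.val).card :=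
        (Finset.card_image_of_injective _ Fin.val_injective).symm
    _ ≤ (Finset.range q).card := Finset.card_le_card himg
    _ = q := Finset.card_range q

lemma filter_lt_card (n q : ℕ) (h : q ≤ n) :
    ((Finset.univ : Finset (Fin n)).filter (fun w : Fin n => (w : ℕ) < q)).card = q := by
  have himg : ((Finset.univ : Finset (Fin n)).filter (fun w : Fin n => (w : ℕ) < q)).image Fin.val
      = Finset.range q := by
    ext i
    constructor
    · intro hi
      obtain ⟨w, hw, rfl⟩ := Finset.mem_image.mp hi
      exact Finset.mem_range.mpr (Finset.mem_filter.mp hw).2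
    · intro hi
      have hiq := Finset.mem_range.mp hi
      exact Finset.mem_image.mpr ⟨⟨i, lt_of_lt_of_le hiq h⟩,
        Finset.mem_filter.mpr ⟨Finset.mem_univ _, hiq⟩, rfl⟩
  calc ((Finset.univ : Finset (Fin n)).filter (fun w : Fin n => (w : ℕ) < q)).card
      = (((Finset.univ : Finset (Fin n)).filter (fun w : Fin n => (w : ℕ) < q)).image Fin.val).card :=
        (Finset.card_image_of_injective _ Fin.val_injective).symm
    _ = q := by rw [himg, Finset.card_range]

lemma matchFinset_sGraph_bound (n q k : ℕ) :
    (matchFinset (sGraph n q) k).card * k.factorial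
      ≤ q.descFactorial k * n.descFactorial k := by
  classical
  set W := (Finset.univ : Finset (Fin n)).filter (fun v : Fin n => (v : ℕ) < q) with hW
  have hinj : Function.Injective (fun e : Sym2 (Fin n) => (e.inf, e.sup)) := by
    intro e e' h
    have h1 : e.inf = e'.inf := (Prod.ext_iff.mp h).1
    have h2 : e.sup = e'.sup := (Prod.ext_iff.mp h).2
    rw [← sym2_mk_inf_sup e, ← sym2_mk_inf_sup e', h1, h2]
  have hcardle : (matchFinset (sGraph n q) k).card ≤ (xsets W k).card := by
    apply Finset.card_le_card_of_injOn (fun M => M.image (fun e => (e.inf, e.sup)))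
    · intro M hM'
      have hM := Finset.mem_coe.mp hM'
      obtain ⟨hcard, hedge, hdisj⟩ := mem_matchFinset.mp hM
      rw [Finset.mem_coe, mem_xsets]
      refine ⟨?_, ?_, ?_⟩
      · rw [Finset.card_image_of_injective _ hinj, hcard]
      · intro p hp
        obtain ⟨e, he, rfl⟩ := Finset.mem_image.mp hp
        have hadj : (sGraph n q).Adj e.inf e.sup := by
          rw [← SimpleGraph.mem_edgeSet, sym2_mk_inf_sup]
          exact hedge e he
        obtain ⟨hne, hlt⟩ := hadj
        have hle : (e.inf : ℕ) ≤ (e.sup : ℕ) := Sym2.inf_le_sup e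
        refine Finset.mem_filter.mpr ⟨Finset.mem_univ _, ?_⟩
        show (e.inf : ℕ) < q
        rcases hlt with h | h
        · exact h
        · omega
      · intro p hp p' hp' hne
        obtain ⟨e, he, rfl⟩ := Finset.mem_image.mp hp
        obtain ⟨e', he', rfl⟩ := Finset.mem_image.mp hp'
        have hee : e ≠ e' := fun h => hne (by rw [h])
        constructor
        · intro h
          exact hdisj e he e' he' hee e.inf (sym2_inf_mem e)
            (by rw [show e.inf = e'.inf from h]; exact sym2_inf_mem e')
        · intro h
          exact hdisj e he e' he' hee e.sup (sym2_sup_mem e)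
            (by rw [show e.sup = e'.sup from h]; exact sym2_sup_mem e')
    · intro A hA B hB h
      exact Finset.image_injective hinj h
  calc (matchFinset (sGraph n q) k).card * k.factorial
      ≤ (xsets W k).card * k.factorial := Nat.mul_le_mul_right _ hcardle
    _ ≤ W.card.descFactorial k * (Fintype.card (Fin n)).descFactorial k := xsets_bound k
    _ ≤ q.descFactorial k * n.descFactorial k := by
        rw [Fintype.card_fin]
        exact Nat.mul_le_mul_right _ (Nat.descFactorial_le k (filter_lt_card_le n q))

lemma sGraph_isKSat (n q : ℕ) (hqn : q + 2 ≤ n) : IsKSat (sGraph n q) (q + 2) := by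
  constructor
  · intro t ht
    have hH : (t.filter (fun v : Fin n => ¬ (v : ℕ) < q)).card ≤ 1 := by
      by_contra h
      push_neg at h
      obtain ⟨a, ha, b, hb, hab⟩ := Finset.one_lt_card.mp h
      have haH := Finset.mem_filter.mp ha
      have hbH := Finset.mem_filter.mp hb
      have hadj := ht.1 (Finset.mem_coe.mpr haH.1) (Finset.mem_coe.mpr hbH.1) hab
      have hq1 := haH.2
      have hq2 := hbH.2
      rcases hadj.2 with h' | h' <;> omega
    have hL : (t.filter (fun v : Fin n => (v : ℕ) < q)).card ≤ q := by
      have hsub : (t.filter (fun v : Fin n => (v : ℕ) < q))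
          ⊆ (Finset.univ : Finset (Fin n)).filter (fun w : Fin n => (w : ℕ) < q) := by
        intro w hw
        exact Finset.mem_filter.mpr ⟨Finset.mem_univ _, (Finset.mem_filter.mp hw).2⟩
      exact le_trans (Finset.card_le_card hsub) (filter_lt_card_le n q)
    have h3 := Finset.card_filter_add_card_filter_not
      (s := t) (p := fun v : Fin n => (v : ℕ) < q)
    have h4 := ht.2
    omega
  · intro u v huv hnadj hcf
    have hu : ¬ (u : ℕ) < q := fun h => hnadj ⟨huv, Or.inl h⟩
    have hv : ¬ (v : ℕ) < q := fun h => hnadj ⟨huv, Or.inr h⟩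
    set C := ((Finset.univ : Finset (Fin n)).filter (fun w : Fin n => (w : ℕ) < q)) ∪ {u, v} with hC
    apply hcf C
    constructor
    · intro a ha b hb hne
      have ha' : a ∈ C := Finset.mem_coe.mp ha
      have hb' : b ∈ C := Finset.mem_coe.mp hb
      rcases Finset.mem_union.mp ha' with haf | hauv
      · exact (SimpleGraph.sup_adj _ _ _ _).mpr
          (Or.inl ⟨hne, Or.inl (Finset.mem_filter.mp haf).2⟩)
      · rcases Finset.mem_union.mp hb' with hbf | hbuv
        · exact (SimpleGraph.sup_adj _ _ _ _).mpr
            (Or.inl ⟨hne, Or.inr (Finset.mem_filter.mp hbf).2⟩)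
        · have hau : a = u ∨ a = v := by
            rcases Finset.mem_insert.mp hauv with h | h
            · exact Or.inl h
            · exact Or.inr (Finset.mem_singleton.mp h)
          have hbu : b = u ∨ b = v := by
            rcases Finset.mem_insert.mp hbuv with h | h
            · exact Or.inl h
            · exact Or.inr (Finset.mem_singleton.mp h)
          apply (SimpleGraph.sup_adj _ _ _ _).mpr
          apply Or.inr
          rw [SimpleGraph.fromEdgeSet_adj]
          refine ⟨?_, hne⟩
          rw [Set.mem_singleton_iff]
          rcases hau with rfl | rfl <;> rcases hbu with rfl | rfl
          · exact absurd rfl hne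
          · rfl
          · exact Sym2.eq_swap
          · exact absurd rfl hne
    · have hdisj : Disjoint
          (((Finset.univ : Finset (Fin n)).filter (fun w : Fin n => (w : ℕ) < q))) ({u, v} : Finset (Fin n)) := by
        rw [Finset.disjoint_left]
        intro w hw hwuv
        have hwq := (Finset.mem_filter.mp hw).2
        rcases Finset.mem_insert.mp hwuv with rfl | h
        · exact hu hwq
        · rw [Finset.mem_singleton] at h
          subst h
          exact hv hwq
      rw [hC, Finset.card_union_of_disjoint hdisj, filter_lt_card n q (by omega),
        Finset.card_pair huv]

lemma empty_mem_matchFinset {G : SimpleGraph V} : (∅ : Finset (Sym2 V)) ∈ matchFinset G 0 := by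
  rw [mem_matchFinset]
  refine ⟨Finset.card_empty, ?_, ?_⟩ <;> intro e he <;> simp at he

lemma matchFinset_succ_edges (G : SimpleGraph V) [DecidableRel G.Adj] (j : ℕ) :
    (matchFinset G j).card * (G.edgeFinset.card - 2 * j * Fintype.card V)
      ≤ (matchFinset G (j + 1)).card * (j + 1) := by
  classical
  apply Finset.card_mul_le_card_mul (· ⊆ ·)
  · intro M hM
    obtain ⟨hcard, hedges, hdisj⟩ := mem_matchFinset.mp hM
    set Fgood := G.edgeFinset.filter (fun f => ∀ e ∈ M, ∀ v ∈ f, v ∉ e) with hFg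
    have hnotM : ∀ f ∈ Fgood, f ∉ M := by
      intro f hf hfM
      obtain ⟨hfE, hfdisj⟩ := Finset.mem_filter.mp hf
      obtain ⟨a, b, rfl⟩ := sym2_exists_rep f
      exact hfdisj s(a, b) hfM a (Sym2.mem_mk_left a b) (Sym2.mem_mk_left a b)
    have hgood : G.edgeFinset.card - 2 * j * Fintype.card V ≤ Fgood.card := by
      have hsplit := Finset.card_filter_add_card_filter_not
        (s := G.edgeFinset) (p := fun f => ∀ e ∈ M, ∀ v ∈ f, v ∉ e)
      have hbadsub : G.edgeFinset.filter (fun f => ¬ ∀ e ∈ M, ∀ v ∈ f, v ∉ e)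
          ⊆ M.biUnion (fun e => Finset.univ.filter (fun f : Sym2 V => ∃ v, v ∈ f ∧ v ∈ e)) := by
        intro f hf
        obtain ⟨hfE, hfbad⟩ := Finset.mem_filter.mp hf
        push_neg at hfbad
        obtain ⟨e, he, v, hvf, hve⟩ := hfbad
        exact Finset.mem_biUnion.mpr
          ⟨e, he, Finset.mem_filter.mpr ⟨Finset.mem_univ _, v, hvf, hve⟩⟩
      have hcover : ∀ e ∈ M,
          (Finset.univ.filter (fun f : Sym2 V => ∃ v, v ∈ f ∧ v ∈ e)).card
            ≤ 2 * Fintype.card V := by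
        intro e _
        obtain ⟨a, b, rfl⟩ := sym2_exists_rep e
        have hsub : Finset.univ.filter (fun f : Sym2 V => ∃ v, v ∈ f ∧ v ∈ s(a, b))
            ⊆ (Finset.univ.image (fun w => s(a, w)))
              ∪ (Finset.univ.image (fun w => s(b, w))) := by
          intro f hf
          obtain ⟨-, v, hvf, hve⟩ := Finset.mem_filter.mp hf
          rw [Sym2.mem_iff] at hve
          obtain ⟨w, rfl⟩ := sym2_mem_exists hvf
          rcases hve with rfl | rfl
          · exact Finset.mem_union_left _ (Finset.mem_image_of_mem _ (Finset.mem_univ w))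
          · exact Finset.mem_union_right _ (Finset.mem_image_of_mem _ (Finset.mem_univ w))
        calc (Finset.univ.filter (fun f : Sym2 V => ∃ v, v ∈ f ∧ v ∈ s(a, b))).card
            ≤ ((Finset.univ.image (fun w => s(a, w)))
                ∪ (Finset.univ.image (fun w => s(b, w)))).card := Finset.card_le_card hsub
          _ ≤ (Finset.univ.image (fun w : V => s(a, w))).card
              + (Finset.univ.image (fun w : V => s(b, w))).card := Finset.card_union_le _ _
          _ ≤ Fintype.card V + Fintype.card V := by
              apply Nat.add_le_add <;>
                exact le_trans Finset.card_image_le (le_of_eq Finset.card_univ)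
          _ = 2 * Fintype.card V := by ring
      have hbad : (G.edgeFinset.filter (fun f => ¬ ∀ e ∈ M, ∀ v ∈ f, v ∉ e)).card
          ≤ 2 * j * Fintype.card V := by
        calc (G.edgeFinset.filter (fun f => ¬ ∀ e ∈ M, ∀ v ∈ f, v ∉ e)).card
            ≤ (M.biUnion (fun e =>
                Finset.univ.filter (fun f : Sym2 V => ∃ v, v ∈ f ∧ v ∈ e))).card :=
              Finset.card_le_card hbadsub
          _ ≤ ∑ e ∈ M,
                (Finset.univ.filter (fun f : Sym2 V => ∃ v, v ∈ f ∧ v ∈ e)).card :=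
              Finset.card_biUnion_le
          _ ≤ M.card • (2 * Fintype.card V) := Finset.sum_le_card_nsmul _ _ _ hcover
          _ = 2 * j * Fintype.card V := by rw [smul_eq_mul, hcard]; ring
      rw [Nat.sub_le_iff_le_add]
      calc G.edgeFinset.card
          = (G.edgeFinset.filter (fun f => ∀ e ∈ M, ∀ v ∈ f, v ∉ e)).card
            + (G.edgeFinset.filter (fun f => ¬ ∀ e ∈ M, ∀ v ∈ f, v ∉ e)).card := hsplit.symm
        _ ≤ Fgood.card + 2 * j * Fintype.card V :=
            Nat.add_le_add (le_of_eq (by rw [hFg])) hbad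
    refine le_trans hgood ?_
    apply Finset.card_le_card_of_injOn (fun f => insert f M)
    · intro f hf'
      have hf := Finset.mem_coe.mp hf'
      obtain ⟨hfE, hfdisj⟩ := Finset.mem_filter.mp hf
      have hfM : f ∉ M := hnotM f hf
      rw [Finset.mem_coe, Finset.mem_bipartiteAbove]
      constructor
      · rw [mem_matchFinset]
        refine ⟨by rw [Finset.card_insert_of_notMem hfM, hcard], ?_, ?_⟩
        · intro e he
          rcases Finset.mem_insert.mp he with rfl | he'
          · exact SimpleGraph.mem_edgeFinset.mp hfE
          · exact hedges e he'
        · intro e he e' he' hee v hv hv'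
          rcases Finset.mem_insert.mp he with rfl | he1 <;>
            rcases Finset.mem_insert.mp he' with rfl | he1'
          · exact absurd rfl hee
          · exact hfdisj e' he1' v hv hv'
          · exact hfdisj e he1 v hv' hv
          · exact hdisj e he1 e' he1' hee v hv hv'
      · exact Finset.subset_insert _ _
    · intro f hf f' hf' heq
      have heq' : insert f M = insert f' M := heq
      have hmem : f ∈ insert f' M := by
        rw [← heq']
        exact Finset.mem_insert_self _ _
      rcases Finset.mem_insert.mp hmem with h | h
      · exact h
      · exact absurd h (hnotM f (Finset.mem_coe.mp hf))
  · intro M hM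
    exact fiber_le (fun A hA => (mem_matchFinset.mp hA).1) ((mem_matchFinset.mp hM).1)

lemma matchings_of_many_edges (G : SimpleGraph V) [DecidableRel G.Adj] {B k : ℕ}
    (hE : (2 * k + B) * Fintype.card V ≤ G.edgeFinset.card) :
    ∀ j ≤ k, (B * Fintype.card V) ^ j ≤ (matchFinset G j).card * j.factorial := by
  intro j
  induction j with
  | zero =>
    intro _
    simpa using Finset.card_pos.mpr ⟨∅, empty_mem_matchFinset⟩
  | succ j IH =>
    intro hjk
    have IH' := IH (by omega)
    have h2j : 2 * j * Fintype.card V ≤ 2 * k * Fintype.card V := by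
      apply Nat.mul_le_mul_right
      omega
    rw [add_mul] at hE
    have hBn : B * Fintype.card V ≤ G.edgeFinset.card - 2 * j * Fintype.card V := by omega
    calc (B * Fintype.card V) ^ (j + 1)
        = (B * Fintype.card V) ^ j * (B * Fintype.card V) := by ring
      _ ≤ ((matchFinset G j).card * j.factorial) * (B * Fintype.card V) :=
          Nat.mul_le_mul_right _ IH'
      _ ≤ ((matchFinset G j).card * j.factorial)
            * (G.edgeFinset.card - 2 * j * Fintype.card V) := Nat.mul_le_mul_left _ hBn
      _ = ((matchFinset G j).card * (G.edgeFinset.card - 2 * j * Fintype.card V))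
            * j.factorial := by ring
      _ ≤ ((matchFinset G (j+1)).card * (j + 1)) * j.factorial :=
          Nat.mul_le_mul_right _ (matchFinset_succ_edges G j)
      _ = (matchFinset G (j+1)).card * (j + 1).factorial := by
          rw [Nat.factorial_succ]; ring

lemma exists_small_degree (G : SimpleGraph V) [DecidableRel G.Adj] {C : ℕ}
    (hE : G.edgeFinset.card ≤ C * Fintype.card V) (hV : 0 < Fintype.card V) :
    ∃ u : V, G.degree u ≤ 2 * C := by
  by_contra h
  push_neg at h
  have hsum : ∑ v : V, G.degree v = 2 * G.edgeFinset.card :=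
    SimpleGraph.sum_degrees_eq_twice_card_edges G
  have hlow : Fintype.card V * (2 * C + 1) ≤ ∑ v : V, G.degree v := by
    calc Fintype.card V * (2 * C + 1) = (Finset.univ : Finset V).card • (2 * C + 1) := by
          rw [Finset.card_univ, smul_eq_mul]
      _ ≤ ∑ v : V, G.degree v := Finset.card_nsmul_le_sum _ _ _ (fun v _ => h v)
  have h2 : 2 * G.edgeFinset.card ≤ 2 * (C * Fintype.card V) := by omega
  have h3 : Fintype.card V * (2 * C + 1) = 2 * (C * Fintype.card V) + Fintype.card V := by ring
  omega

lemma sat_clique {G : SimpleGraph V} {s : ℕ} (hsat : IsKSat G s) {u v : V}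
    (hne : u ≠ v) (hnadj : ¬ G.Adj u v) :
    ∃ Q : Finset V, Q.card = s - 2 ∧ (∀ x ∈ Q, G.Adj u x) ∧ (∀ x ∈ Q, G.Adj v x) ∧
      (∀ x ∈ Q, ∀ x' ∈ Q, x ≠ x' → G.Adj x x') := by
  have hns := hsat.2 u v hne hnadj
  rw [SimpleGraph.CliqueFree] at hns
  push_neg at hns
  obtain ⟨t, ht⟩ := hns
  have hGadj : ∀ a b : V, (G ⊔ SimpleGraph.fromEdgeSet {s(u, v)}).Adj a b ↔
      G.Adj a b ∨ (s(a, b) = s(u, v) ∧ a ≠ b) := by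
    intro a b
    rw [SimpleGraph.sup_adj, SimpleGraph.fromEdgeSet_adj, Set.mem_singleton_iff]
  have hu : u ∈ t := by
    by_contra hu
    apply hsat.1 t
    refine ⟨?_, ht.2⟩
    intro a ha b hb hab
    have h := ht.1 ha hb hab
    rw [hGadj] at h
    rcases h with h | ⟨h, -⟩
    · exact h
    · exfalso
      rw [Sym2.eq_iff] at h
      rcases h with ⟨rfl, rfl⟩ | ⟨rfl, rfl⟩
      · exact hu (Finset.mem_coe.mp ha)
      · exact hu (Finset.mem_coe.mp hb)
  have hv : v ∈ t := by
    by_contra hv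
    apply hsat.1 t
    refine ⟨?_, ht.2⟩
    intro a ha b hb hab
    have h := ht.1 ha hb hab
    rw [hGadj] at h
    rcases h with h | ⟨h, -⟩
    · exact h
    · exfalso
      rw [Sym2.eq_iff] at h
      rcases h with ⟨rfl, rfl⟩ | ⟨rfl, rfl⟩
      · exact hv (Finset.mem_coe.mp hb)
      · exact hv (Finset.mem_coe.mp ha)
  refine ⟨(t.erase u).erase v, ?_, ?_, ?_, ?_⟩
  · have hvt : v ∈ t.erase u := Finset.mem_erase.mpr ⟨Ne.symm hne, hv⟩
    rw [Finset.card_erase_of_mem hvt, Finset.card_erase_of_mem hu, ht.2]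
    omega
  · intro x hx
    have h1 := Finset.mem_erase.mp hx
    have h2 := Finset.mem_erase.mp h1.2
    have h := ht.1 (Finset.mem_coe.mpr hu) (Finset.mem_coe.mpr h2.2) (Ne.symm h2.1)
    rw [hGadj] at h
    rcases h with h | ⟨h, -⟩
    · exact h
    · exfalso
      rw [Sym2.eq_iff] at h
      rcases h with ⟨-, h'⟩ | ⟨h', -⟩
      · exact h1.1 h'
      · exact hne h'
  · intro x hx
    have h1 := Finset.mem_erase.mp hx
    have h2 := Finset.mem_erase.mp h1.2
    have h := ht.1 (Finset.mem_coe.mpr hv) (Finset.mem_coe.mpr h2.2) (Ne.symm h1.1)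
    rw [hGadj] at h
    rcases h with h | ⟨h, -⟩
    · exact h
    · exfalso
      rw [Sym2.eq_iff] at h
      rcases h with ⟨h', -⟩ | ⟨-, h'⟩
      · exact hne h'.symm
      · exact h2.1 h'
  · intro x hx x' hx' hxx
    have h1 := Finset.mem_erase.mp hx
    have h2 := Finset.mem_erase.mp h1.2
    have h1' := Finset.mem_erase.mp hx'
    have h2' := Finset.mem_erase.mp h1'.2
    have h := ht.1 (Finset.mem_coe.mpr h2.2) (Finset.mem_coe.mpr h2'.2) hxx
    rw [hGadj] at h
    rcases h with h | ⟨h, -⟩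
    · exact h
    · exfalso
      rw [Sym2.eq_iff] at h
      rcases h with ⟨h', -⟩ | ⟨-, h'⟩
      · exact h2.1 h'
      · exact h2'.1 h'

lemma descFactorial_sub_le (a b : ℕ) (hba : b ≤ a) :
    ∀ c, a.descFactorial c ≤ b.descFactorial c + c * (a - b) * a ^ (c - 1) := by
  intro c
  induction c with
  | zero => simp
  | succ c IH =>
    have hstep : a * (c * (a - b) * a ^ (c - 1)) ≤ c * (a - b) * a ^ c := by
      cases c with
      | zero => simp
      | succ c =>
        apply le_of_eq
        rw [Nat.succ_sub_one]
        ring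
    calc a.descFactorial (c + 1) = (a - c) * a.descFactorial c := Nat.descFactorial_succ a c
      _ ≤ (a - c) * (b.descFactorial c + c * (a - b) * a ^ (c - 1)) := Nat.mul_le_mul_left _ IH
      _ = (a - c) * b.descFactorial c + (a - c) * (c * (a - b) * a ^ (c - 1)) := by ring
      _ ≤ ((b - c) + (a - b)) * b.descFactorial c + a * (c * (a - b) * a ^ (c - 1)) := by
          apply Nat.add_le_add
          · apply Nat.mul_le_mul_right
            omega
          · apply Nat.mul_le_mul_right
            omega
      _ ≤ ((b - c) + (a - b)) * b.descFactorial c + c * (a - b) * a ^ c :=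
          Nat.add_le_add_left hstep _
      _ = (b - c) * b.descFactorial c + (a - b) * b.descFactorial c + c * (a - b) * a ^ c := by
          ring
      _ ≤ (b - c) * b.descFactorial c + (a - b) * a ^ c + c * (a - b) * a ^ c := by
          apply Nat.add_le_add_right
          apply Nat.add_le_add_left
          apply Nat.mul_le_mul_left
          calc b.descFactorial c ≤ b ^ c := Nat.descFactorial_le_pow b c
            _ ≤ a ^ c := Nat.pow_le_pow_left hba c
      _ = b.descFactorial (c + 1) + (c + 1) * (a - b) * a ^ ((c + 1) - 1) := by
          rw [Nat.descFactorial_succ, Nat.succ_sub_one]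
          ring

lemma main_structure (s k : ℕ) (hk : 3 ≤ k) (hks : k ≤ s - 2) :
    ∃ C : ℕ, 0 < C ∧ ∀ n, ∀ G : SimpleGraph (Fin n), C ≤ n →
      IsKSat G s → numMatchings G k = satM n k s →
      ∃ m : ℕ, n - C ≤ m ∧ m ≤ n ∧
        ∃ f : Fin m → Fin n, Function.Injective f ∧
          ∀ a b, (sGraph m (s - 2)).Adj a b → G.Adj (f a) (f b) := by
  classical
  set q := s - 2 with hqdef
  have hq3 : 3 ≤ q := le_trans hk hks
  have hkq : k ≤ q := hks
  have hs2 : q + 2 = s := by omega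
  -- constants
  set C₁ : ℕ := 2 * k + (q ^ k + 1) with hC₁
  set D : ℕ := 2 * C₁ with hD
  set P : ℕ := Nat.choose D q with hP
  set C₃ : ℕ := q ^ k * (k * (D + 2)) with hC₃
  set C₅ : ℕ := (4 * P) ^ (k - 1) * C₃ + 1 with hC₅
  have hqD : q ≤ D := by
    have h1 : q ≤ q ^ k := Nat.le_self_pow (by omega) q
    omega
  have hPpos : 0 < P := Nat.choose_pos hqD
  set C : ℕ := q + k + 8 + 8 * D + 8 * (P * k) + 4 * (P * C₅) with hC
  refine ⟨C, by omega, ?_⟩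
  intro n G hn hsat hext
  haveI : DecidableRel G.Adj := Classical.decRel _
  have hn1 : 1 ≤ n := by omega
  have hcardV : Fintype.card (Fin n) = n := Fintype.card_fin n
  -- upper bound
  have hsatle : numMatchings G k ≤ numMatchings (sGraph n q) k := by
    rw [hext]
    apply Nat.sInf_le
    refine ⟨sGraph n q, ?_, rfl⟩
    have := sGraph_isKSat n q (by omega)
    rwa [hs2] at this
  have hupper : (matchFinset G k).card * k.factorial
      ≤ q.descFactorial k * n.descFactorial k := by
    calc (matchFinset G k).card * k.factorial
        = numMatchings G k * k.factorial := by rw [numMatchings_eq]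
      _ ≤ numMatchings (sGraph n q) k * k.factorial := Nat.mul_le_mul_right _ hsatle
      _ = (matchFinset (sGraph n q) k).card * k.factorial := by rw [numMatchings_eq]
      _ ≤ _ := matchFinset_sGraph_bound n q k
  -- edge bound
  have hedge : G.edgeFinset.card ≤ C₁ * n := by
    by_contra h
    push_neg at h
    have hE : (2 * k + (q ^ k + 1)) * Fintype.card (Fin n) ≤ G.edgeFinset.card := by
      rw [hcardV]
      calc (2 * k + (q ^ k + 1)) * n = C₁ * n := by rw [hC₁]
        _ ≤ G.edgeFinset.card := le_of_lt h
    have hmany := matchings_of_many_edges G hE k le_rfl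
    have h1 : ((q ^ k + 1) * n) ^ k ≤ q ^ k * n ^ k := by
      calc ((q ^ k + 1) * n) ^ k = ((q ^ k + 1) * Fintype.card (Fin n)) ^ k := by rw [hcardV]
        _ ≤ (matchFinset G k).card * k.factorial := hmany
        _ ≤ q.descFactorial k * n.descFactorial k := hupper
        _ ≤ q ^ k * n ^ k := Nat.mul_le_mul (Nat.descFactorial_le_pow q k)
            (Nat.descFactorial_le_pow n k)
    have h2 : ((q ^ k + 1) * n) ^ k = (q ^ k + 1) ^ k * n ^ k := mul_pow _ _ _
    have h3 : (q ^ k + 1) * n ^ k ≤ (q ^ k + 1) ^ k * n ^ k :=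
      Nat.mul_le_mul_right _ (Nat.le_self_pow (by omega) _)
    have hnk : 0 < n ^ k := pow_pos (by omega) k
    have h4 : (q ^ k + 1) * n ^ k ≤ q ^ k * n ^ k := by omega
    have h5 : q ^ k + 1 ≤ q ^ k := Nat.le_of_mul_le_mul_right h4 hnk
    omega
  -- min degree vertex
  obtain ⟨u₁, hu₁⟩ := exists_small_degree G (by rw [hcardV]; exact hedge) (by omega)
  set S := G.neighborFinset u₁ with hS
  have hScard : S.card ≤ D := by
    rw [hS, SimpleGraph.card_neighborFinset_eq_degree, hD]
    exact hu₁
  set Y := (Finset.univ : Finset (Fin n)) \ insert u₁ S with hY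
  have hu₁S : u₁ ∉ S := by
    rw [hS]
    exact SimpleGraph.notMem_neighborFinset_self G u₁
  have hYcard : Y.card = n - (S.card + 1) := by
    rw [hY, Finset.card_sdiff_of_subset (Finset.subset_univ _), Finset.card_insert_of_notMem hu₁S,
      Finset.card_univ, hcardV]
  have hYn : n - 1 - D ≤ Y.card := by omega
  have hYlen : Y.card ≤ n := by omega
  -- clique extraction
  have hQex : ∀ y ∈ Y, ∃ Q : Finset (Fin n), Q.card = q ∧ Q ⊆ S ∧
      (∀ x ∈ Q, G.Adj y x) ∧ (∀ x ∈ Q, ∀ x' ∈ Q, x ≠ x' → G.Adj x x') := by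
    intro y hy
    have hy' := Finset.mem_sdiff.mp hy
    have hyu : y ≠ u₁ := by
      intro h
      exact hy'.2 (h ▸ Finset.mem_insert_self u₁ S)
    have hyS : y ∉ S := fun h => hy'.2 (Finset.mem_insert_of_mem h)
    have hnadj : ¬ G.Adj u₁ y := by
      intro h
      exact hyS (by rw [hS]; exact (SimpleGraph.mem_neighborFinset G u₁ y).mpr h)
    obtain ⟨Q, hQcard, hQu, hQv, hQc⟩ := sat_clique hsat (Ne.symm hyu) hnadj
    refine ⟨Q, hQcard, ?_, hQv, hQc⟩
    intro x hx
    rw [hS]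
    exact (SimpleGraph.mem_neighborFinset G u₁ x).mpr (hQu x hx)
  choose! Qf hQcard hQsub hQadj hQclique using hQex
  have hq_card : ∀ y ∈ Y, q ≤ (Qf y).card := fun y hy => le_of_eq (hQcard y hy).symm
  have hout : ∀ y ∈ Y, ∀ x ∈ Qf y, x ∉ Y := by
    intro y hy x hx hxY
    have hxS : x ∈ S := hQsub y hy hx
    exact (Finset.mem_sdiff.mp hxY).2 (Finset.mem_insert_of_mem hxS)
  -- classes
  set T := S.powersetCard q with hT
  have hQmem : ∀ y ∈ Y, Qf y ∈ T := fun y hy =>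
    Finset.mem_powersetCard.mpr ⟨hQsub y hy, hQcard y hy⟩
  have hTcard : T.card ≤ P := by
    rw [hT, Finset.card_powersetCard, hP]
    exact Nat.choose_le_choose q hScard
  have hYsum : Y.card = ∑ Q ∈ T, (Y.filter (fun y => Qf y = Q)).card :=
    Finset.card_eq_sum_card_fiberwise hQmem
  have hYne : Y.Nonempty := Finset.card_pos.mp (by omega)
  have hTne : T.Nonempty := ⟨Qf hYne.choose, hQmem _ hYne.choose_spec⟩
  obtain ⟨Q₁, hQ₁T, hmax⟩ := T.exists_max_image (fun Q => (Y.filter (fun y => Qf y = Q)).card) hTne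
  set Y₁ := Y.filter (fun y => Qf y = Q₁) with hY₁
  have haP : Y.card ≤ P * Y₁.card := by
    calc Y.card = ∑ Q ∈ T, (Y.filter (fun y => Qf y = Q)).card := hYsum
      _ ≤ T.card • Y₁.card := Finset.sum_le_card_nsmul _ _ _ (fun Q hQ => hmax Q hQ)
      _ = T.card * Y₁.card := by rw [smul_eq_mul]
      _ ≤ P * Y₁.card := Nat.mul_le_mul_right _ hTcard
  have hQ₁card : Q₁.card = q := (Finset.mem_powersetCard.mp hQ₁T).2
  have hY₁Y : Y₁ ⊆ Y := Finset.filter_subset _ _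
  have hak : k ≤ Y₁.card := by
    have h1 : n - 1 - D ≤ P * Y₁.card := le_trans hYn haP
    by_contra h
    push_neg at h
    have h2 : P * Y₁.card ≤ P * k := Nat.mul_le_mul_left _ (by omega)
    omega
  have h4Pa : n ≤ 4 * (P * (Y₁.card - k)) := by
    have h1 : n - 1 - D ≤ P * Y₁.card := le_trans hYn haP
    have h2 : P * Y₁.card = P * (Y₁.card - k) + P * k := by
      rw [← Nat.mul_add]
      congr 1
      omega
    omega
  have h4Pa' : n ≤ 4 * (P * Y₁.card) := by
    have h2 : P * (Y₁.card - k) ≤ P * Y₁.card := Nat.mul_le_mul_left _ (by omega)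
    omega
  by_cases hcase : ∃ Q₂ ∈ T, Q₂ ≠ Q₁ ∧ C₅ ≤ (Y.filter (fun y => Qf y = Q₂)).card
  · -- surplus contradiction
    exfalso
    obtain ⟨Q₂, hQ₂T, hQ₂ne, hb⟩ := hcase
    set Y₂ := Y.filter (fun y => Qf y = Q₂) with hY₂
    have hQ₂card : Q₂.card = q := (Finset.mem_powersetCard.mp hQ₂T).2
    have hx0ex : (Q₁ \ Q₂).Nonempty := by
      rw [Finset.sdiff_nonempty]
      intro hsub
      exact hQ₂ne (Finset.eq_of_subset_of_card_le hsub (by omega)).symm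
    obtain ⟨x0, hx0⟩ := hx0ex
    have hx0mem := Finset.mem_sdiff.mp hx0
    have hY₂Y : Y₂ ⊆ Y := Finset.filter_subset _ _
    have hdisjY : ∀ y ∈ Y₂, y ∉ Y₁ := by
      intro y hy hy1
      have e1 : Qf y = Q₂ := (Finset.mem_filter.mp hy).2
      have e2 : Qf y = Q₁ := (Finset.mem_filter.mp hy1).2
      exact hQ₂ne (e1 ▸ e2)
    have hx0Y₁ : ∀ y ∈ Y₁, x0 ∈ Qf y := by
      intro y hy
      rw [(Finset.mem_filter.mp hy).2]
      exact hx0mem.1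
    have hx0Y₂ : ∀ y ∈ Y₂, x0 ∉ Qf y := by
      intro y hy
      rw [(Finset.mem_filter.mp hy).2]
      exact hx0mem.2
    have hq_card₁ : ∀ y ∈ Y₁, q ≤ (Qf y).card := fun y hy => hq_card y (hY₁Y hy)
    have hkk : k - 1 + 1 = k := by omega
    have hmlow := pairMsets_card_lower (Y := Y) (Qf := Qf) hq_card (k - 1)
    have hglow := gpairMsets_lower hq_card₁ hx0Y₁ hk hkq (k - 2) (by omega)
    have hkk2 : k - 2 + 1 = k - 1 := by omega
    rw [hkk2] at hglow
    have hsurp := surplus_step (x0 := x0) hq_card hY₁Y hY₂Y hdisjY hx0Y₂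
      (by omega : 1 ≤ k - 1) (by omega : k - 1 ≤ q)
    rw [hkk] at hsurp
    have hmle : (pairMsets Y Qf k).card ≤ (matchFinset G k).card :=
      pairMsets_card_le_matchFinset hQadj hout
    have hfaceq : (k - 1).factorial * k = k.factorial := by
      conv_rhs => rw [← hkk]
      rw [Nat.factorial_succ, hkk]
      ring
    have key : Y.card.descFactorial k * q.descFactorial k
        + ((gpairMsets Y₁ Qf x0 (k - 1)).card * (k - 1).factorial) * Y₂.card
        ≤ (matchFinset G k).card * k.factorial := by
      have e1 : Y.card.descFactorial k * q.descFactorial k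
          = (Y.card.descFactorial (k-1) * q.descFactorial (k-1))
            * ((Y.card - (k-1)) * (q - (k-1))) := by
        conv_lhs => rw [← hkk]
        rw [Nat.descFactorial_succ, Nat.descFactorial_succ]
        ring
      calc Y.card.descFactorial k * q.descFactorial k
            + ((gpairMsets Y₁ Qf x0 (k - 1)).card * (k - 1).factorial) * Y₂.card
          = (Y.card.descFactorial (k-1) * q.descFactorial (k-1))
              * ((Y.card - (k-1)) * (q - (k-1)))
            + ((gpairMsets Y₁ Qf x0 (k - 1)).card * Y₂.card) * (k-1).factorial := by
            rw [e1]; ring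
        _ ≤ ((pairMsets Y Qf (k-1)).card * (k-1).factorial)
              * ((Y.card - (k-1)) * (q - (k-1)))
            + ((gpairMsets Y₁ Qf x0 (k - 1)).card * Y₂.card) * (k-1).factorial :=
            Nat.add_le_add_right (Nat.mul_le_mul_right _ hmlow) _
        _ = ((pairMsets Y Qf (k-1)).card * ((Y.card - (k-1)) * (q - (k-1)))
              + (gpairMsets Y₁ Qf x0 (k - 1)).card * Y₂.card) * (k-1).factorial := by
            ring
        _ ≤ ((pairMsets Y Qf k).card * k) * (k-1).factorial :=
            Nat.mul_le_mul_right _ hsurp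
        _ = (pairMsets Y Qf k).card * ((k-1).factorial * k) := by ring
        _ = (pairMsets Y Qf k).card * k.factorial := by rw [hfaceq]
        _ ≤ (matchFinset G k).card * k.factorial := Nat.mul_le_mul_right _ hmle
    -- compare with upper bound
    have hdfn : n.descFactorial k ≤ Y.card.descFactorial k + k * (n - Y.card) * n ^ (k-1) :=
      descFactorial_sub_le n Y.card hYlen k
    have hnY : n - Y.card ≤ D + 2 := by omega
    have hup2 : q.descFactorial k * n.descFactorial k
        ≤ Y.card.descFactorial k * q.descFactorial k + C₃ * n ^ (k-1) := by
      calc q.descFactorial k * n.descFactorial k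
          ≤ q.descFactorial k * (Y.card.descFactorial k + k * (n - Y.card) * n ^ (k-1)) :=
            Nat.mul_le_mul_left _ hdfn
        _ = Y.card.descFactorial k * q.descFactorial k
            + q.descFactorial k * (k * (n - Y.card) * n ^ (k-1)) := by ring
        _ ≤ Y.card.descFactorial k * q.descFactorial k
            + q ^ k * (k * (D + 2) * n ^ (k-1)) := by
            apply Nat.add_le_add_left
            apply Nat.mul_le_mul (Nat.descFactorial_le_pow q k)
            apply Nat.mul_le_mul_right
            exact Nat.mul_le_mul_left _ hnY
        _ = Y.card.descFactorial k * q.descFactorial k + C₃ * n ^ (k-1) := by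
            rw [hC₃]; ring
    have hgb : ((gpairMsets Y₁ Qf x0 (k - 1)).card * (k - 1).factorial) * Y₂.card
        ≤ C₃ * n ^ (k-1) := by
      have h1 := le_trans key hupper
      omega
    have hglow2 : Y₁.card * (Y₁.card - k) ^ (k-2)
        ≤ (gpairMsets Y₁ Qf x0 (k - 1)).card * (k - 1).factorial := by
      refine le_trans ?_ hglow
      apply Nat.mul_le_mul_left
      apply Nat.pow_le_pow_left
      exact Nat.le_mul_of_pos_right _ (by omega)
    have hfinal : Y₁.card * (Y₁.card - k) ^ (k-2) * C₅ ≤ C₃ * n ^ (k-1) := by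
      calc Y₁.card * (Y₁.card - k) ^ (k-2) * C₅
          ≤ ((gpairMsets Y₁ Qf x0 (k - 1)).card * (k - 1).factorial) * C₅ :=
            Nat.mul_le_mul_right _ hglow2
        _ ≤ ((gpairMsets Y₁ Qf x0 (k - 1)).card * (k - 1).factorial) * Y₂.card :=
            Nat.mul_le_mul_left _ hb
        _ ≤ C₃ * n ^ (k-1) := hgb
    -- now derive contradiction
    have hpow : n ^ (k-1) ≤ (4*P) ^ (k-1) * (Y₁.card * (Y₁.card - k) ^ (k-2)) := by
      have e1 : n ^ (k-1) = n * n ^ (k-2) := by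
        conv_lhs => rw [show k - 1 = (k-2) + 1 by omega]
        rw [pow_succ]
        ring
      have e2 : n ^ (k-2) ≤ (4 * (P * (Y₁.card - k))) ^ (k-2) :=
        Nat.pow_le_pow_left h4Pa _
      have e3 : (4 * (P * (Y₁.card - k))) ^ (k-2) = (4*P) ^ (k-2) * (Y₁.card - k) ^ (k-2) := by
        rw [← mul_pow]
        congr 1
        ring
      calc n ^ (k-1) = n * n ^ (k-2) := e1
        _ ≤ (4 * (P * Y₁.card)) * ((4*P) ^ (k-2) * (Y₁.card - k) ^ (k-2)) := by
            apply Nat.mul_le_mul h4Pa'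
            rw [← e3]
            exact e2
        _ = ((4*P) * (4*P) ^ (k-2)) * (Y₁.card * (Y₁.card - k) ^ (k-2)) := by ring
        _ = (4*P) ^ (k-1) * (Y₁.card * (Y₁.card - k) ^ (k-2)) := by
            rw [show k - 1 = (k-2) + 1 by omega, pow_succ]
            ring
    have hcontr : n ^ (k-1) * C₅ ≤ (4*P) ^ (k-1) * C₃ * n ^ (k-1) := by
      calc n ^ (k-1) * C₅ ≤ ((4*P) ^ (k-1) * (Y₁.card * (Y₁.card - k) ^ (k-2))) * C₅ :=
            Nat.mul_le_mul_right _ hpow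
        _ = (4*P) ^ (k-1) * (Y₁.card * (Y₁.card - k) ^ (k-2) * C₅) := by ring
        _ ≤ (4*P) ^ (k-1) * (C₃ * n ^ (k-1)) := Nat.mul_le_mul_left _ hfinal
        _ = (4*P) ^ (k-1) * C₃ * n ^ (k-1) := by ring
    have hnk1 : 0 < n ^ (k-1) := pow_pos (by omega) _
    have : C₅ ≤ (4*P) ^ (k-1) * C₃ := by
      have h1 : n ^ (k-1) * C₅ ≤ n ^ (k-1) * ((4*P) ^ (k-1) * C₃) := by
        calc n ^ (k-1) * C₅ ≤ (4*P) ^ (k-1) * C₃ * n ^ (k-1) := hcontr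
          _ = n ^ (k-1) * ((4*P) ^ (k-1) * C₃) := by ring
      exact Nat.le_of_mul_le_mul_left h1 hnk1
    omega
  · -- structure case
    push_neg at hcase
    have hsmall : ∑ Q ∈ T.erase Q₁, (Y.filter (fun y => Qf y = Q)).card ≤ P * C₅ := by
      calc ∑ Q ∈ T.erase Q₁, (Y.filter (fun y => Qf y = Q)).card
          ≤ (T.erase Q₁).card • C₅ := by
            apply Finset.sum_le_card_nsmul
            intro Q hQ
            exact le_of_lt (hcase Q (Finset.mem_of_mem_erase hQ) (Finset.ne_of_mem_erase hQ))
        _ = (T.erase Q₁).card * C₅ := by rw [smul_eq_mul]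
        _ ≤ P * C₅ := Nat.mul_le_mul_right _
            (le_trans (Finset.card_le_card (Finset.erase_subset _ _)) hTcard)
    have hsum2 : Y.card = Y₁.card + ∑ Q ∈ T.erase Q₁, (Y.filter (fun y => Qf y = Q)).card := by
      rw [hYsum, ← Finset.add_sum_erase T _ hQ₁T]
    have ha : n - 1 - D - P * C₅ ≤ Y₁.card := by omega
    have hY₁ne : Y₁.Nonempty := Finset.card_pos.mp (by omega)
    obtain ⟨y₀, hy₀⟩ := hY₁ne
    have hy₀Y : y₀ ∈ Y := (Finset.mem_filter.mp hy₀).1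
    have hQ₁eq : Qf y₀ = Q₁ := (Finset.mem_filter.mp hy₀).2
    have hQ₁clique : ∀ x ∈ Q₁, ∀ x' ∈ Q₁, x ≠ x' → G.Adj x x' := by
      intro x hx x' hx' hne
      exact hQclique y₀ hy₀Y x (hQ₁eq ▸ hx) x' (hQ₁eq ▸ hx') hne
    have hY₁adj : ∀ y ∈ Y₁, ∀ x ∈ Q₁, G.Adj y x := by
      intro y hy x hx
      have he : Qf y = Q₁ := (Finset.mem_filter.mp hy).2
      exact hQadj y (hY₁Y hy) x (he ▸ hx)
    have hdisjQY : ∀ x ∈ Q₁, x ∉ Y₁ := by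
      intro x hx hxY
      have hxS : x ∈ S := (Finset.mem_powersetCard.mp hQ₁T).1 hx
      exact (Finset.mem_sdiff.mp (hY₁Y hxY)).2 (Finset.mem_insert_of_mem hxS)
    set l := Q₁.sort (· ≤ ·) ++ Y₁.sort (· ≤ ·) with hl
    have hlen : l.length = q + Y₁.card := by
      rw [hl, List.length_append, Finset.length_sort, Finset.length_sort, hQ₁card]
    have hnodup : l.Nodup := by
      rw [hl]
      apply List.Nodup.append (Finset.sort_nodup _ _) (Finset.sort_nodup _ _)
      intro x hx hx'
      rw [Finset.mem_sort] at hx hx'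
      exact hdisjQY x hx hx'
    have hmn : q + Y₁.card ≤ n := by
      have := Finset.card_le_card (show Q₁ ∪ Y₁ ⊆ Finset.univ from Finset.subset_univ _)
      rw [Finset.card_union_of_disjoint, Finset.card_univ, hcardV, hQ₁card] at this
      · exact this
      · rw [Finset.disjoint_left]
        exact fun x hx hx' => hdisjQY x hx hx'
    refine ⟨q + Y₁.card, by omega, hmn, fun i => l.get (Fin.cast hlen.symm i), ?_, ?_⟩
    · intro i j hij
      have h1 : (Fin.cast hlen.symm i) = (Fin.cast hlen.symm j) := hnodup.get_inj_iff.mp hij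
      have h2 := congrArg Fin.val h1
      simp only [Fin.coe_cast] at h2
      exact Fin.ext h2
    · intro i j hadj
      obtain ⟨hne, hor⟩ := hadj
      have hne' : l.get (Fin.cast hlen.symm i) ≠ l.get (Fin.cast hlen.symm j) := by
        intro h
        have h1 : (Fin.cast hlen.symm i) = (Fin.cast hlen.symm j) := hnodup.get_inj_iff.mp h
        have h2 := congrArg Fin.val h1
        simp only [Fin.coe_cast] at h2
        exact hne (Fin.ext h2)
      have hmemQ : ∀ (i : Fin (q + Y₁.card)), (i : ℕ) < q →
          l.get (Fin.cast hlen.symm i) ∈ Q₁ := by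
        intro i hi
        have hilen : (i : ℕ) < (Q₁.sort (· ≤ ·)).length := by
          rw [Finset.length_sort, hQ₁card]
          exact hi
        have he : l.get (Fin.cast hlen.symm i) = (Q₁.sort (· ≤ ·))[(i : ℕ)] := by
          rw [List.get_eq_getElem]
          exact List.getElem_append_left hilen
        have hmem : (Q₁.sort (· ≤ ·))[(i : ℕ)]'hilen ∈ Q₁ :=
          (Finset.mem_sort (· ≤ ·)).mp (List.getElem_mem hilen)
        rw [he]
        exact hmem
      have hmemY : ∀ (i : Fin (q + Y₁.card)), q ≤ (i : ℕ) →
          l.get (Fin.cast hlen.symm i) ∈ Y₁ := by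
        intro i hi
        have hq1 : (Q₁.sort (· ≤ ·)).length ≤ (i : ℕ) := by
          rw [Finset.length_sort, hQ₁card]
          exact hi
        have hilen : (i : ℕ) - (Q₁.sort (· ≤ ·)).length < (Y₁.sort (· ≤ ·)).length := by
          rw [Finset.length_sort, Finset.length_sort, hQ₁card]
          have := i.isLt
          omega
        have he : l.get (Fin.cast hlen.symm i)
            = (Y₁.sort (· ≤ ·))[(i : ℕ) - (Q₁.sort (· ≤ ·)).length] := by
          rw [List.get_eq_getElem]
          exact List.getElem_append_right hq1
        have hmem : (Y₁.sort (· ≤ ·))[(i : ℕ) - (Q₁.sort (· ≤ ·)).length]'hilen ∈ Y₁ :=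
          (Finset.mem_sort (· ≤ ·)).mp (List.getElem_mem hilen)
        rw [he]
        exact hmem
      rcases hor with hi | hj
      · by_cases hjq : (j : ℕ) < q
        · exact hQ₁clique _ (hmemQ i hi) _ (hmemQ j hjq) hne'
        · exact (hY₁adj _ (hmemY j (by omega)) _ (hmemQ i hi)).symm
      · by_cases hiq : (i : ℕ) < q
        · exact hQ₁clique _ (hmemQ i hiq) _ (hmemQ j hj) hne'
        · exact hY₁adj _ (hmemY i (by omega)) _ (hmemQ j hj)

end Stmt15

/-- For `3 ≤ k ≤ s - 2`, every extremal `K_s`-saturated graph on `n` vertices contains a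
subgraph isomorphic to `S_{m,s-2}` for some `m ≥ (1 - ε)·n`. -/
theorem stmt_15 (s k : ℕ) (hk : 3 ≤ k) (hks : k ≤ s - 2) (ε : ℝ) (hε : 0 < ε) :
    ∃ n₀ : ℕ, ∀ n ≥ n₀, ∀ G : SimpleGraph (Fin n),
      IsKSat G s → numMatchings G k = satM n k s →
      ∃ m : ℕ, (1 - ε) * (n : ℝ) ≤ (m : ℝ) ∧
        ∃ f : Fin m → Fin n, Function.Injective f ∧
          ∀ a b, (sGraph m (s - 2)).Adj a b → G.Adj (f a) (f b) := by
  obtain ⟨C, hCpos, hmain⟩ := Stmt15.main_structure s k hk hks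
  refine ⟨max C (Nat.ceil ((C : ℝ) / ε)), ?_⟩
  intro n hn G hsat hext
  have hnC : C ≤ n := le_trans (le_max_left _ _) hn
  obtain ⟨m, hm1, hm2, f, hf, hadj⟩ := hmain n G hnC hsat hext
  refine ⟨m, ?_, f, hf, hadj⟩
  have hceil : (Nat.ceil ((C : ℝ) / ε) : ℝ) ≤ (n : ℝ) :=
    Nat.cast_le.mpr (le_trans (le_max_right _ _) hn)
  have hCε : (C : ℝ) ≤ ε * (n : ℝ) := by
    have h1 : ((C : ℝ) / ε) ≤ (Nat.ceil ((C : ℝ) / ε) : ℝ) := Nat.le_ceil _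
    have h2 := le_trans h1 hceil
    calc (C : ℝ) = (C : ℝ) / ε * ε := by field_simp
      _ ≤ (n : ℝ) * ε := mul_le_mul_of_nonneg_right h2 (le_of_lt hε)
      _ = ε * (n : ℝ) := by ring
  have hmreal : (n : ℝ) - (C : ℝ) ≤ (m : ℝ) := by
    have h3 : ((n - C : ℕ) : ℝ) ≤ (m : ℝ) := Nat.cast_le.mpr hm1
    rw [Nat.cast_sub hnC] at h3
    exact h3
  calc (1 - ε) * (n : ℝ) = (n : ℝ) - ε * (n : ℝ) := by ring
    _ ≤ (n : ℝ) - (C : ℝ) := by linarith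
    _ ≤ (m : ℝ) := hmreal
end

section
/- Let s ≥ 3, let G be a K_s-saturated graph on n vertices, and suppose G contains a subgraph H isomorphic to S_{n₁,s−2} with n₁ < n such that G contains no subgraph isomorphic to S_{n₁+1,s−2} (i.e., H is a maximum such subgraph). Let I be the independent part of H (the n₁−s+2 vertices of H outside its (s−2)-clique). Then every vertex v ∈ I has at least one neighbor in V(G) ∖ V(H). -/
/-- If `G` is `K_s`-saturated on `n` vertices and contains a copy of `S_{n₁,s-2}` with
`n₁ < n` which cannot be extended to a copy of `S_{n₁+1,s-2}`, then every vertex of the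
independent part of the copy has a neighbor outside the copy. -/
theorem stmt_16 {n : ℕ} (s : ℕ) (hs : 3 ≤ s) (G : SimpleGraph (Fin n)) (hG : IsKSat G s)
    (n₁ : ℕ) (hn₁ : n₁ < n) (f : Fin n₁ → Fin n) (hf : Function.Injective f)
    (hhom : ∀ a b, (sGraph n₁ (s - 2)).Adj a b → G.Adj (f a) (f b))
    (hmax : ¬ ∃ g : Fin (n₁ + 1) → Fin n, Function.Injective g ∧
      ∀ a b, (sGraph (n₁ + 1) (s - 2)).Adj a b → G.Adj (g a) (g b)) :
    ∀ i : Fin n₁, s - 2 ≤ (i : ℕ) → ∃ u : Fin n, u ∉ Set.range f ∧ G.Adj (f i) u := by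
  intro i hi
  by_contra hcon
  push_neg at hcon
  have hsn : s - 2 < n₁ := lt_of_le_of_lt hi i.isLt
  -- get u outside range f
  have hns : ¬ Function.Surjective f := by
    intro h
    have := Fintype.card_le_of_surjective f h
    simp at this
    omega
  rw [Function.Surjective] at hns
  push_neg at hns
  obtain ⟨u, hu⟩ := hns
  have huR : u ∉ Set.range f := by
    rintro ⟨a, rfl⟩; exact hu a rfl
  have hvne : f i ≠ u := fun h => huR ⟨i, h⟩
  have hnadj : ¬ G.Adj (f i) u := hcon u huR
  have hsat := hG.2 (f i) u hvne hnadj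
  rw [SimpleGraph.CliqueFree] at hsat
  push_neg at hsat
  obtain ⟨T, hT⟩ := hsat
  have hTcard : T.card = s := hT.2
  have hTadj : ∀ x ∈ T, ∀ y ∈ T, x ≠ y →
      G.Adj x y ∨ (x = f i ∧ y = u) ∨ (x = u ∧ y = f i) := by
    intro x hx y hy hxy
    have := hT.1 hx hy hxy
    simp only [SimpleGraph.sup_adj, SimpleGraph.fromEdgeSet_adj, Set.mem_singleton_iff,
      Sym2.eq_iff] at this
    tauto
  have hmems : f i ∈ T ∧ u ∈ T := by
    by_contra hor
    have : G.IsNClique s T := by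
      refine ⟨fun x hx y hy hxy => ?_, hTcard⟩
      rcases hTadj x hx y hy hxy with h | ⟨rfl, rfl⟩ | ⟨rfl, rfl⟩
      · exact h
      · exact absurd ⟨hx, hy⟩ hor
      · exact absurd ⟨hy, hx⟩ hor
    exact hG.1 T this
  obtain ⟨hvT, huT⟩ := hmems
  set C : Finset (Fin n) := (T.erase u).erase (f i) with hC
  have hCcard : C.card = s - 2 := by
    rw [hC, Finset.card_erase_of_mem (Finset.mem_erase.mpr ⟨hvne, hvT⟩),
      Finset.card_erase_of_mem huT, hTcard]
    omega
  have hCmem : ∀ c ∈ C, c ∈ T ∧ c ≠ u ∧ c ≠ f i := by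
    intro c hc
    rw [hC] at hc
    simp only [Finset.mem_erase] at hc
    exact ⟨hc.2.2, hc.2.1, hc.1⟩
  have hCadjv : ∀ c ∈ C, G.Adj (f i) c := by
    intro c hc
    obtain ⟨hcT, hcu, hcv⟩ := hCmem c hc
    rcases hTadj (f i) hvT c hcT (Ne.symm hcv) with h | ⟨_, h2⟩ | ⟨h1, _⟩
    · exact h
    · exact absurd h2 hcu
    · exact absurd h1 hvne
  have hCadju : ∀ c ∈ C, G.Adj c u := by
    intro c hc
    obtain ⟨hcT, hcu, hcv⟩ := hCmem c hc
    rcases hTadj c hcT u huT hcu with h | ⟨h1, _⟩ | ⟨h1, _⟩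
    · exact h
    · exact absurd h1 hcv
    · exact absurd h1 hcu
  -- the clique part of the copy
  set Kfin : Finset (Fin n) :=
    Finset.image (fun j : Fin (s - 2) => f (Fin.castLE hsn.le j)) Finset.univ with hK
  have hKinj : Function.Injective (fun j : Fin (s - 2) => f (Fin.castLE hsn.le j)) :=
    fun a b hab => Fin.castLE_injective hsn.le (hf hab)
  have hKcard : Kfin.card = s - 2 := by
    rw [hK, Finset.card_image_of_injective _ hKinj, Finset.card_univ, Fintype.card_fin]
  -- every c ∈ C lies in Kfin
  have hsub : C ⊆ Kfin := by
    intro c hc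
    have hadjvc := hCadjv c hc
    have hcR : c ∈ Set.range f := by
      by_contra hcR
      exact hcon c hcR hadjvc
    obtain ⟨a, rfl⟩ := hcR
    by_cases ha : (a : ℕ) < s - 2
    · rw [hK]
      simp only [Finset.mem_image, Finset.mem_univ, true_and]
      exact ⟨⟨a, ha⟩, congrArg f (Fin.ext rfl)⟩
    · -- build an s-clique, contradiction
      exfalso
      set W : Finset (Fin n) := insert (f a) (insert (f i) Kfin) with hW
      have hfafi : f a ≠ f i := fun h => G.irrefl (h ▸ hadjvc)
      have hfaK : f a ∉ Kfin := by
        rw [hK]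
        simp only [Finset.mem_image, Finset.mem_univ, true_and]
        rintro ⟨j, hj⟩
        have := hf hj
        apply ha
        rw [← this]
        exact j.isLt
      have hfiK : f i ∉ Kfin := by
        rw [hK]
        simp only [Finset.mem_image, Finset.mem_univ, true_and]
        rintro ⟨j, hj⟩
        have := hf hj
        have : (j : ℕ) = (i : ℕ) := congrArg Fin.val this
        omega
      have hWcard : W.card = s := by
        rw [hW, Finset.card_insert_of_notMem (by
          simp only [Finset.mem_insert]
          push_neg
          exact ⟨hfafi, hfaK⟩),
          Finset.card_insert_of_notMem hfiK, hKcard]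
        omega
      have hWclique : G.IsClique (W : Set (Fin n)) := by
        intro x hx y hy hxy
        simp only [hW, Finset.coe_insert, Set.mem_insert_iff, Finset.mem_coe, hK,
          Finset.mem_image, Finset.mem_univ, true_and] at hx hy
        have adjK : ∀ j : Fin (s - 2), ∀ b : Fin n₁, (s - 2 : ℕ) ≤ (b : ℕ) →
            G.Adj (f (Fin.castLE hsn.le j)) (f b) := by
          intro j b hb
          apply hhom
          refine ⟨?_, Or.inl ?_⟩
          · intro h
            have := congrArg Fin.val h
            simp only [Fin.coe_castLE] at this
            omega
          · exact j.isLt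
        have adjKK : ∀ j j' : Fin (s - 2), j ≠ j' →
            G.Adj (f (Fin.castLE hsn.le j)) (f (Fin.castLE hsn.le j')) := by
          intro j j' hjj
          apply hhom
          refine ⟨?_, Or.inl j.isLt⟩
          intro h
          exact hjj (Fin.castLE_injective hsn.le h)
        rcases hx with rfl | rfl | ⟨j, rfl⟩ <;> rcases hy with rfl | rfl | ⟨j', rfl⟩
        · exact absurd rfl hxy
        · exact hadjvc.symm
        · exact (adjK j' a (le_of_not_gt ha)).symm
        · exact hadjvc
        · exact absurd rfl hxy
        · exact (adjK j' i hi).symm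
        · exact adjK j a (le_of_not_gt ha)
        · exact adjK j i hi
        · exact adjKK j j' (fun h => hxy (congrArg _ (congrArg _ h)))
      exact hG.1 W ⟨hWclique, hWcard⟩
  have hCeq : C = Kfin :=
    Finset.eq_of_subset_of_card_le hsub (by rw [hCcard, hKcard])
  have hKadju : ∀ a : Fin n₁, (a : ℕ) < s - 2 → G.Adj (f a) u := by
    intro a ha
    apply hCadju
    rw [hCeq, hK]
    simp only [Finset.mem_image, Finset.mem_univ, true_and]
    exact ⟨⟨a, ha⟩, congrArg f (Fin.ext rfl)⟩
  -- build the larger copy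
  apply hmax
  refine ⟨fun j => if h : (j : ℕ) < n₁ then f ⟨j, h⟩ else u, ?_, ?_⟩
  · intro a b hab
    dsimp only at hab
    split_ifs at hab with h1 h2 h2
    · exact Fin.ext (Fin.mk.inj_iff.mp (hf hab))
    · exact absurd hab (hu _)
    · exact absurd hab.symm (hu _)
    · have : (a : ℕ) = n₁ := by omega
      have hb : (b : ℕ) = n₁ := by omega
      exact Fin.ext (by omega)
  · intro a b hab
    obtain ⟨hne, hor⟩ := hab
    have hne' : (a : ℕ) ≠ (b : ℕ) := fun h => hne (Fin.ext h)
    dsimp only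
    split_ifs with h1 h2 h2
    · exact hhom ⟨a, h1⟩ ⟨b, h2⟩ ⟨fun h => hne' (Fin.mk.inj_iff.mp h), hor⟩
    · have hb : (b : ℕ) = n₁ := by omega
      have ha : (a : ℕ) < s - 2 := by
        rcases hor with h | h
        · exact h
        · omega
      exact hKadju ⟨a, h1⟩ ha
    · have ha : (a : ℕ) = n₁ := by omega
      have hb : (b : ℕ) < s - 2 := by
        rcases hor with h | h
        · omega
        · exact h
      exact (hKadju ⟨b, h2⟩ hb).symm
    · omega
end

section
/- Let n, s be integers with n ≥ s ≥ 4, and let G be a graph on n vertices with m edges such that every vertex of G has degree either s−2 or n−1. Then the number of matchings of size 2 in G equals (1/2)·(m² + (7 − 2n − 2s)·m + n(n−1)(s−2)). -/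
open Finset


/-- For `n ≥ s ≥ 4`, if every vertex of a graph `G` on `n` vertices with `m` edges has
degree `s - 2` or `n - 1`, then `N(M_2, G) = (1/2)(m² + (7 - 2n - 2s)m + n(n-1)(s-2))`. -/
theorem stmt_18 (n s : ℕ) (hs : 4 ≤ s) (hn : s ≤ n) (G : SimpleGraph (Fin n))
    [DecidableRel G.Adj]
    (hdeg : ∀ v, G.degree v = s - 2 ∨ G.degree v = n - 1) :
    (numMatchings G 2 : ℝ) = (1 / 2) * ((G.edgeFinset.card : ℝ) ^ 2 +
      (7 - 2 * (n : ℝ) - 2 * (s : ℝ)) * (G.edgeFinset.card : ℝ) +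
      (n : ℝ) * ((n : ℝ) - 1) * ((s : ℝ) - 2)) := by
  classical
  set m := G.edgeFinset.card with hm
  set P : Finset (Sym2 (Fin n)) → Prop :=
    fun M => ∀ e ∈ M, ∀ f ∈ M, e ≠ f → ∀ v, v ∈ e → v ∉ f with hP
  -- Step 1 : numMatchings as a Finset card
  have h1 : numMatchings G 2 = ((G.edgeFinset.powersetCard 2).filter P).card := by
    rw [numMatchings, ← Set.ncard_coe_finset]
    congr 1
    ext M
    simp only [Set.mem_setOf_eq, coe_filter, mem_powersetCard, Finset.subset_iff,
      SimpleGraph.mem_edgeFinset, hP]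
    tauto
  -- Step 2 : complement count
  have h2 : ((G.edgeFinset.powersetCard 2).filter P).card +
      ((G.edgeFinset.powersetCard 2).filter (fun M => ¬ P M)).card = m.choose 2 := by
    rw [card_filter_add_card_filter_not, card_powersetCard]
  -- Step 3 : bad pairs counted by degrees
  have h3 : ((G.edgeFinset.powersetCard 2).filter (fun M => ¬ P M)) =
      Finset.univ.biUnion (fun v => (G.incidenceFinset v).powersetCard 2) := by
    ext M
    simp only [mem_filter, mem_powersetCard, mem_biUnion, mem_univ, true_and]
    constructor
    · rintro ⟨⟨hsub, hcard⟩, hnp⟩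
      simp only [hP, not_forall, Classical.not_imp, exists_prop] at hnp
      obtain ⟨e, he, f, hf, hef, v, hve, hvf⟩ := hnp
      rw [not_not] at hvf
      refine ⟨v, ?_, hcard⟩
      intro g hg
      rw [SimpleGraph.mem_incidenceFinset]
      have hge : g ∈ G.edgeSet := SimpleGraph.mem_edgeFinset.mp (hsub hg)
      have hgef : g = e ∨ g = f := by
        obtain ⟨a, b, hab, rfl⟩ := Finset.card_eq_two.mp hcard
        simp only [Finset.mem_insert, Finset.mem_singleton] at he hf hg
        rcases he with rfl | rfl <;> rcases hf with rfl | rfl <;> tauto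
      rcases hgef with rfl | rfl
      · exact ⟨hge, hve⟩
      · exact ⟨hge, hvf⟩
    · rintro ⟨v, hsub, hcard⟩
      obtain ⟨e, f, hef, hM⟩ := Finset.card_eq_two.mp hcard
      have hev : e ∈ G.incidenceFinset v := hsub (by simp [hM])
      have hfv : f ∈ G.incidenceFinset v := hsub (by simp [hM])
      rw [SimpleGraph.mem_incidenceFinset] at hev hfv
      refine ⟨⟨fun g hg => ?_, hcard⟩, ?_⟩
      · rw [SimpleGraph.mem_edgeFinset]
        have := hsub hg
        rw [SimpleGraph.mem_incidenceFinset] at this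
        exact this.1
      · intro hp
        rw [hP] at hp
        exact hp e (by simp [hM]) f (by simp [hM]) hef v hev.2 hfv.2
  -- disjointness of the union
  have hdisj : ∀ v ∈ (Finset.univ : Finset (Fin n)), ∀ w ∈ Finset.univ, v ≠ w →
      Disjoint ((G.incidenceFinset v).powersetCard 2)
        ((G.incidenceFinset w).powersetCard 2) := by
    intro v _ w _ hvw
    rw [Finset.disjoint_left]
    rintro M hMv hMw
    rw [mem_powersetCard] at hMv hMw
    obtain ⟨e, f, hef, hM⟩ := Finset.card_eq_two.mp hMv.2
    have he1 := hMv.1 (show e ∈ M by simp [hM])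
    have hf1 := hMv.1 (show f ∈ M by simp [hM])
    have he2 := hMw.1 (show e ∈ M by simp [hM])
    have hf2 := hMw.1 (show f ∈ M by simp [hM])
    rw [SimpleGraph.mem_incidenceFinset] at he1 hf1 he2 hf2
    have heq : e = s(v, w) := (Sym2.mem_and_mem_iff hvw).mp ⟨he1.2, he2.2⟩
    have hfq : f = s(v, w) := (Sym2.mem_and_mem_iff hvw).mp ⟨hf1.2, hf2.2⟩
    exact hef (heq.trans hfq.symm)
  have h4 : ((G.edgeFinset.powersetCard 2).filter (fun M => ¬ P M)).card =
      ∑ v, (G.degree v).choose 2 := by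
    rw [h3, Finset.card_biUnion hdisj]
    refine Finset.sum_congr rfl fun v _ => ?_
    rw [card_powersetCard, SimpleGraph.card_incidenceFinset_eq_degree]
  -- the master counting identity, in ℕ
  have hmain : numMatchings G 2 + ∑ v, (G.degree v).choose 2 = m.choose 2 := by
    rw [h1, ← h4]; exact h2
  -- now cast to ℝ
  have hcast : (numMatchings G 2 : ℝ) +
      ∑ v, ((G.degree v : ℝ) * ((G.degree v : ℝ) - 1) / 2) =
      (m : ℝ) * ((m : ℝ) - 1) / 2 := by
    have := congrArg (fun k : ℕ => (k : ℝ)) hmain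
    simp only [Nat.cast_add, Nat.cast_sum, Nat.cast_choose_two] at this
    exact this
  -- degrees: real value
  have hs2 : (2 : ℝ) ≤ (s : ℝ) := by exact_mod_cast le_trans (by norm_num) hs
  have hdR : ∀ v, (G.degree v : ℝ) = (s : ℝ) - 2 ∨ (G.degree v : ℝ) = (n : ℝ) - 1 := by
    intro v
    rcases hdeg v with h | h
    · left; rw [h]; push_cast [Nat.cast_sub (by omega : 2 ≤ s)]; ring
    · right; rw [h]; push_cast [Nat.cast_sub (by omega : 1 ≤ n)]; ring
  -- sum of degrees
  have hsum : ∑ v, (G.degree v : ℝ) = 2 * (m : ℝ) := by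
    have := G.sum_degrees_eq_twice_card_edges
    exact_mod_cast congrArg (fun k : ℕ => (k : ℝ)) this
  -- sum of squares
  have hsq : ∑ v, (G.degree v : ℝ) ^ 2 =
      ((n : ℝ) + (s : ℝ) - 3) * (2 * (m : ℝ)) - (n : ℝ) * ((n : ℝ) - 1) * ((s : ℝ) - 2) := by
    have key : ∀ v, (G.degree v : ℝ) ^ 2 =
        ((n : ℝ) + (s : ℝ) - 3) * (G.degree v : ℝ) - ((n : ℝ) - 1) * ((s : ℝ) - 2) := by
      intro v
      rcases hdR v with h | h <;> rw [h] <;> ring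
    calc ∑ v, (G.degree v : ℝ) ^ 2
        = ∑ v, (((n : ℝ) + (s : ℝ) - 3) * (G.degree v : ℝ) - ((n : ℝ) - 1) * ((s : ℝ) - 2)) :=
          Finset.sum_congr rfl fun v _ => key v
      _ = ((n : ℝ) + (s : ℝ) - 3) * ∑ v, (G.degree v : ℝ) -
            (n : ℝ) * (((n : ℝ) - 1) * ((s : ℝ) - 2)) := by
          rw [Finset.sum_sub_distrib, ← Finset.mul_sum, Finset.sum_const, card_univ,
            Fintype.card_fin, nsmul_eq_mul]
      _ = _ := by rw [hsum]; ring
  -- finish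
  have hsum2 : ∑ v, ((G.degree v : ℝ) * ((G.degree v : ℝ) - 1) / 2) =
      (∑ v, (G.degree v : ℝ) ^ 2 - ∑ v, (G.degree v : ℝ)) / 2 := by
    rw [← Finset.sum_sub_distrib, ← Finset.sum_div]
    congr 1; refine Finset.sum_congr rfl fun v _ => ?_; ring
  rw [hsum2, hsq, hsum] at hcast
  linarith [hcast]
end

section
/- For all integers n and s with n ≥ s ≥ 4, every K_s-saturated graph G on n vertices satisfies N(M_2, G) ≥ N(M_2, S_{n,s−2}), with equality if and only if G is isomorphic to S_{n,s−2}. -/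
set_option maxHeartbeats 1600000


open Finset

variable {n k : ℕ}

noncomputable def qv (n k : ℕ) (i : Fin n) : Fin (k+1) → ℝ := fun j => ((i : ℕ) : ℝ) ^ (j : ℕ)

noncomputable def rw' (n k : ℕ) (u v : Fin n) : Fin n → Fin (k+1) → ℝ :=
  Pi.single u (qv n k u - qv n k v) + Pi.single v (qv n k v - qv n k u)

lemma rw'_symm (k : ℕ) (u v : Fin n) : rw' n k u v = rw' n k v u := by
  unfold rw'; abel

lemma rw'_self (k : ℕ) (u : Fin n) : rw' n k u u = 0 := by
  unfold rw'; simp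

lemma rw'_apply (k : ℕ) (u v w : Fin n) :
    rw' n k u v w = (if w = u then qv n k u - qv n k v else 0)
      + (if w = v then qv n k v - qv n k u else 0) := by
  unfold rw'
  simp [Pi.single_apply]

/-- linear relations among at most `k+1` of the moment vectors are trivial -/
lemma rel0 (k : ℕ) (hkn : k + 1 ≤ n) (D : Finset (Fin n)) (hD : D.card ≤ k + 1)
    (c : Fin n → ℝ) (h : ∑ i ∈ D, c i • qv n k i = 0) : ∀ i ∈ D, c i = 0 := by
  classical
  obtain ⟨T, hST, hT⟩ := Finset.exists_superset_card_eq hD (by simpa using hkn)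
  have e : Fin (k+1) ≃ T := (T.equivFinOfCardEq hT).symm
  set t : Fin (k+1) → ℝ := fun j => (((e j : Fin n) : ℕ) : ℝ) with ht
  have htinj : Function.Injective t := by
    intro a b hab
    apply e.injective
    exact Subtype.ext (Fin.ext (Nat.cast_injective hab))
  have hvd : LinearIndependent ℝ (fun i => Matrix.vandermonde t i) := by
    rw [show (fun i => Matrix.vandermonde t i) = (Matrix.vandermonde t).row from rfl,
      Matrix.linearIndependent_rows_iff_isUnit, Matrix.isUnit_iff_isUnit_det, isUnit_iff_ne_zero]
    rw [Ne, Matrix.det_vandermonde_eq_zero_iff]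
    rintro ⟨i, j, hij, hne⟩
    exact hne (htinj hij)
  have hTi : LinearIndependent ℝ (fun i : T => qv n k i) := by
    have := hvd.comp e.symm e.symm.injective
    convert this using 1
    funext i j
    simp [qv, Matrix.vandermonde, t, ht]
  have hsum : ∑ i ∈ T, (if i ∈ D then c i else 0) • qv n k i = 0 := by
    rw [← Finset.sum_subset hST (by intro x _ hx; simp [hx])]
    rw [← h]
    exact Finset.sum_congr rfl (by intro x hx; simp [hx])
  have h2 : ∑ i : T, (if (i : Fin n) ∈ D then c i else 0) • qv n k (i : Fin n) = 0 := by
    rw [Finset.sum_coe_sort T (fun i => (if i ∈ D then c i else 0) • qv n k i)]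
    exact hsum
  have := Fintype.linearIndependent_iff.mp hTi (fun i => if (i : Fin n) ∈ D then c i else 0) h2
  intro i hi
  have := this ⟨i, hST hi⟩
  simpa [hi] using this


def vp (n k : ℕ) (p : Fin n × Fin n) : Prop := p.1 < p.2 ∧ ((p.1 : ℕ) < k ∨ (p.2 : ℕ) < k)

instance : DecidablePred (vp n k) := fun p => by unfold vp; infer_instance

noncomputable def gg (g : {p : Fin n × Fin n // vp n k p} → ℝ) (a b : Fin n) : ℝ :=
  if h : vp n k (a, b) then g ⟨(a, b), h⟩ else 0

lemma master (g : {p : Fin n × Fin n // vp n k p} → ℝ) (w : Fin n) :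
    ∑ p : {p : Fin n × Fin n // vp n k p}, g p • rw' n k p.1.1 p.1.2 w
      = ∑ u, (gg g u w + gg g w u) • (qv n k w - qv n k u) := by
  classical
  have h1 : ∑ p : {p : Fin n × Fin n // vp n k p}, g p • rw' n k p.1.1 p.1.2 w
      = ∑ p ∈ (univ : Finset (Fin n × Fin n)).filter (vp n k),
          gg g p.1 p.2 • rw' n k p.1 p.2 w := by
    rw [Finset.sum_subtype (p := vp n k) ((univ : Finset (Fin n × Fin n)).filter (vp n k))
      (by intro x; simp) (fun p => gg g p.1 p.2 • rw' n k p.1 p.2 w)]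
    apply Finset.sum_congr rfl
    intro p _
    congr 1
    unfold gg
    rw [dif_pos p.2]
  rw [h1]
  rw [Finset.sum_filter]
  have h2 : ∀ p : Fin n × Fin n,
      (if vp n k p then gg g p.1 p.2 • rw' n k p.1 p.2 w else 0)
        = gg g p.1 p.2 • rw' n k p.1 p.2 w := by
    intro p
    split
    · rfl
    · unfold gg
      rw [dif_neg ‹¬ _›, zero_smul]
  simp only [h2]
  rw [← Finset.univ_product_univ, Finset.sum_product]
  have h3 : ∀ a b : Fin n, gg g a b • rw' n k a b w
      = (if w = a then gg g a b • (qv n k a - qv n k b) else 0)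
        + (if w = b then gg g a b • (qv n k b - qv n k a) else 0) := by
    intro a b
    rw [rw'_apply, smul_add]
    congr 1 <;> split <;> simp
  simp only [h3]
  simp only [Finset.sum_add_distrib]
  have h4 : ∑ a : Fin n, ∑ b : Fin n, (if w = a then gg g a b • (qv n k a - qv n k b) else 0)
      = ∑ b : Fin n, gg g w b • (qv n k w - qv n k b) := by
    rw [Finset.sum_comm]
    apply Finset.sum_congr rfl
    intro b _
    rw [Finset.sum_ite_eq]
    simp
  have h5 : ∑ a : Fin n, ∑ b : Fin n, (if w = b then gg g a b • (qv n k b - qv n k a) else 0)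
      = ∑ a : Fin n, gg g a w • (qv n k w - qv n k a) := by
    apply Finset.sum_congr rfl
    intro a _
    rw [Finset.sum_ite_eq]
    simp
  rw [h4, h5, ← Finset.sum_add_distrib]
  apply Finset.sum_congr rfl
  intro u _
  rw [add_smul]
  ring_nf

lemma rel1 (hkn : k + 1 ≤ n) (D : Finset (Fin n)) (w : Fin n) (hw : w ∉ D)
    (hD : D.card + 1 ≤ k + 1) (hfun : Fin n → ℝ)
    (h : ∑ u ∈ D, hfun u • (qv n k w - qv n k u) = 0) : ∀ u ∈ D, hfun u = 0 := by
  classical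
  set c : Fin n → ℝ := fun i => if i = w then ∑ u ∈ D, hfun u else -hfun i with hc
  have hsum : ∑ i ∈ insert w D, c i • qv n k i = 0 := by
    rw [Finset.sum_insert hw]
    have : ∑ i ∈ D, c i • qv n k i = ∑ i ∈ D, -(hfun i • qv n k i) := by
      apply Finset.sum_congr rfl
      intro i hi
      have : i ≠ w := fun h' => hw (h' ▸ hi)
      simp [hc, this]
    rw [this]
    have hcw : c w = ∑ u ∈ D, hfun u := by simp [hc]
    rw [hcw, Finset.sum_smul, Finset.sum_neg_distrib, ← sub_eq_add_neg, ← Finset.sum_sub_distrib, ← h]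
    exact Finset.sum_congr rfl (fun u _ => (smul_sub _ _ _).symm)
  have := rel0 k hkn (insert w D) (by
    calc (insert w D).card ≤ D.card + 1 := Finset.card_insert_le _ _
    _ ≤ k + 1 := hD) c hsum
  intro u hu
  have hne : u ≠ w := fun h' => hw (h' ▸ hu)
  have := this u (Finset.mem_insert_of_mem hu)
  simpa [hc, hne] using this

lemma cardC (hkn : k ≤ n) : ((univ : Finset (Fin n)).filter fun i : Fin n => (i : ℕ) < k).card = k := by
  have h : ((univ : Finset (Fin n)).filter fun i : Fin n => (i : ℕ) < k).card
      = (univ : Finset (Fin k)).card := by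
    apply Finset.card_bij (fun (i : Fin n) hi => (⟨(i : ℕ), (Finset.mem_filter.mp hi).2⟩ : Fin k))
    · intros; exact Finset.mem_univ _
    · intro a ha b hb hab
      exact Fin.ext (show (a:ℕ) = (b:ℕ) by simpa using hab)
    · intro j _
      refine ⟨⟨(j : ℕ), lt_of_lt_of_le j.2 hkn⟩, ?_, rfl⟩
      simp [j.2]
  rw [h, Finset.card_univ, Fintype.card_fin]

lemma gg_eq_zero (g : {p : Fin n × Fin n // vp n k p} → ℝ) {a b : Fin n}
    (h : ¬ (a < b ∧ ((a : ℕ) < k ∨ (b : ℕ) < k))) : gg g a b = 0 := by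
  unfold gg; rw [dif_neg]; exact h

lemma indepRows (hkn : k + 2 ≤ n) :
    LinearIndependent ℝ (fun p : {p : Fin n × Fin n // vp n k p} => rw' n k p.1.1 p.1.2) := by
  classical
  rw [Fintype.linearIndependent_iff]
  intro g hg
  have hkn' : k + 1 ≤ n := by omega
  set C : Finset (Fin n) := (univ : Finset (Fin n)).filter fun i : Fin n => (i : ℕ) < k with hC
  have hCcard : C.card = k := cardC (by omega)
  have hmem : ∀ i : Fin n, i ∈ C ↔ (i : ℕ) < k := by intro i; simp [hC]
  have hmaster : ∀ w : Fin n, ∑ u, (gg g u w + gg g w u) • (qv n k w - qv n k u) = 0 := by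
    intro w
    rw [← master g w]
    have := congrFun hg w
    rw [Finset.sum_apply] at this
    simpa using this
  -- Step A : pairs (core, noncore) have zero coefficient
  have stepA : ∀ w : Fin n, ¬ (w : ℕ) < k → ∀ u ∈ C, gg g u w = 0 := by
    intro w hw u hu
    have hred : ∑ u ∈ C, (gg g u w + gg g w u) • (qv n k w - qv n k u) = 0 := by
      rw [← hmaster w]
      apply Finset.sum_subset (Finset.subset_univ C)
      intro x _ hx
      have hx' : ¬ (x : ℕ) < k := fun h => hx ((hmem x).mpr h)
      have h1 : gg g x w = 0 := gg_eq_zero g (by rintro ⟨_, h | h⟩; exacts [hx' h, hw h])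
      have h2 : gg g w x = 0 := gg_eq_zero g (by rintro ⟨_, h | h⟩; exacts [hw h, hx' h])
      rw [h1, h2]; simp
    have hwC : w ∉ C := fun h => hw ((hmem w).mp h)
    have : gg g u w + gg g w u = 0 := rel1 hkn' C w hwC (by omega) (fun u => gg g u w + gg g w u) hred u hu
    have hgwu : gg g w u = 0 := gg_eq_zero g (by
      rintro ⟨hlt, h | h⟩
      · exact hw h
      · have := Fin.lt_iff_val_lt_val.mp hlt
        exact hw (by omega))
    rw [hgwu, add_zero] at this
    exact this
  -- Step B : all coefficients vanish
  intro p
  obtain ⟨⟨a, b⟩, hab, hcond⟩ := p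
  have hgp : g ⟨(a, b), ⟨hab, hcond⟩⟩ = gg g a b := by unfold gg; rw [dif_pos ⟨hab, hcond⟩]
  rw [hgp]
  by_cases hb : (b : ℕ) < k
  · -- b core, hence a core
    have ha : (a : ℕ) < k := by
      have : (a : ℕ) < (b : ℕ) := hab
      omega
    have hred : ∑ u ∈ C.erase a, (gg g u a + gg g a u) • (qv n k a - qv n k u) = 0 := by
      rw [← hmaster a]
      apply Finset.sum_subset (Finset.subset_univ _)
      intro x _ hx
      by_cases hxa : x = a
      · subst hxa
        have h1 : gg g x x = 0 := gg_eq_zero g (by rintro ⟨h, _⟩; exact absurd h (lt_irrefl x))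
        rw [h1]; simp
      · have hxC : x ∉ C := by
          intro hxC; exact hx (Finset.mem_erase.mpr ⟨hxa, hxC⟩)
        have hx' : ¬ (x : ℕ) < k := fun h => hxC ((hmem x).mpr h)
        have h1 : gg g x a = 0 := gg_eq_zero g (by
          rintro ⟨hlt, _⟩
          have := Fin.lt_iff_val_lt_val.mp hlt
          omega)
        have h2 : gg g a x = 0 := stepA x hx' a ((hmem a).mpr ha)
        rw [h1, h2]; simp
    have haC : a ∉ C.erase a := fun h => (Finset.mem_erase.mp h).1 rfl
    have hcard : (C.erase a).card + 1 ≤ k + 1 := by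
      have := Finset.card_erase_le (s := C) (a := a)
      omega
    have : gg g b a + gg g a b = 0 := rel1 hkn' (C.erase a) a haC hcard
      (fun u => gg g u a + gg g a u) hred b
      (Finset.mem_erase.mpr ⟨hab.ne', (hmem b).mpr hb⟩)
    have hgba : gg g b a = 0 := gg_eq_zero g (by
      rintro ⟨hlt, _⟩
      exact absurd (lt_trans hab hlt) (lt_irrefl a))
    rw [hgba, zero_add] at this
    exact this
  · have ha : (a : ℕ) < k := hcond.resolve_right hb
    exact stepA b hb a ((hmem a).mpr ha)


variable {n k : ℕ}

lemma clique_extract {V : Type*} [DecidableEq V] {G : SimpleGraph V} {s : ℕ}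
    (hfree : G.CliqueFree s) {u v : V}
    (h : ¬ (G ⊔ SimpleGraph.fromEdgeSet {s(u, v)}).CliqueFree s) :
    ∃ t : Finset V, t.card = s ∧ u ∈ t ∧ v ∈ t ∧
      ∀ a ∈ t, ∀ b ∈ t, a ≠ b → ¬(a = u ∧ b = v) → ¬(a = v ∧ b = u) → G.Adj a b := by
  rw [SimpleGraph.CliqueFree] at h
  push_neg at h
  obtain ⟨t, ht⟩ := h
  have hadj : ∀ a ∈ t, ∀ b ∈ t, a ≠ b →
      G.Adj a b ∨ (a = u ∧ b = v) ∨ (a = v ∧ b = u) := by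
    intro a ha b hb hab
    have := ht.1 ha hb hab
    rw [SimpleGraph.sup_adj, SimpleGraph.fromEdgeSet_adj] at this
    rcases this with h' | ⟨h', _⟩
    · exact Or.inl h'
    · rw [Set.mem_singleton_iff, Sym2.eq_iff] at h'
      exact Or.inr h'
  have hu : u ∈ t := by
    by_contra hu
    apply hfree t
    refine ⟨?_, ht.2⟩
    intro a ha b hb hab
    rcases hadj a ha b hb hab with h' | ⟨h', _⟩ | ⟨_, h'⟩
    · exact h'
    · exact absurd (h' ▸ ha) hu
    · exact absurd (h' ▸ hb) hu
  have hv : v ∈ t := by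
    by_contra hv
    apply hfree t
    refine ⟨?_, ht.2⟩
    intro a ha b hb hab
    rcases hadj a ha b hb hab with h' | ⟨_, h'⟩ | ⟨h', _⟩
    · exact h'
    · exact absurd (h' ▸ hb) hv
    · exact absurd (h' ▸ ha) hv
  refine ⟨t, ht.2, hu, hv, ?_⟩
  intro a ha b hb hab h1 h2
  rcases hadj a ha b hb hab with h' | h' | h'
  · exact h'
  · exact absurd h' h1
  · exact absurd h' h2

lemma min_degree {G : SimpleGraph (Fin n)} {s : ℕ} [DecidableRel G.Adj]
    (hG : IsKSat G s) (hns : s ≤ n) (hs : 2 ≤ s) (v : Fin n) :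
    s - 2 ≤ G.degree v := by
  by_cases hdom : ∀ u : Fin n, u ≠ v → G.Adj v u
  · have hsub : (univ : Finset (Fin n)).erase v ⊆ G.neighborFinset v := by
      intro u hu
      rw [SimpleGraph.mem_neighborFinset]
      exact hdom u (Finset.mem_erase.mp hu).1
    have := Finset.card_le_card hsub
    rw [Finset.card_erase_of_mem (Finset.mem_univ v), Finset.card_univ, Fintype.card_fin] at this
    rw [SimpleGraph.degree]
    omega
  · push_neg at hdom
    obtain ⟨u, hune, hnadj⟩ := hdom
    have hnadj' : ¬ G.Adj u v := fun h => hnadj h.symm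
    obtain ⟨t, htcard, hut, hvt, hadj⟩ :=
      clique_extract hG.1 (hG.2 u v hune hnadj')
    have hsub : (t.erase u).erase v ⊆ G.neighborFinset v := by
      intro a ha
      have hav : a ≠ v := (Finset.mem_erase.mp ha).1
      have hau : a ≠ u := (Finset.mem_erase.mp (Finset.mem_erase.mp ha).2).1
      have hat : a ∈ t := (Finset.mem_erase.mp (Finset.mem_erase.mp ha).2).2
      rw [SimpleGraph.mem_neighborFinset]
      exact (hadj a hat v hvt hav (fun h => hau h.1) (fun h => hav h.1)).symm
    have := Finset.card_le_card hsub
    rw [Finset.card_erase_of_mem, Finset.card_erase_of_mem hut, htcard] at this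
    · rw [SimpleGraph.degree]; omega
    · exact Finset.mem_erase.mpr ⟨fun h => hune h.symm, hvt⟩

noncomputable def rowE (n k : ℕ) : Sym2 (Fin n) → (Fin n → Fin (k+1) → ℝ) :=
  Sym2.lift ⟨fun u v => rw' n k u v, fun u v => rw'_symm k u v⟩

lemma rowE_mk (u v : Fin n) : rowE n k s(u, v) = rw' n k u v := rfl

lemma qv_injective (hk : 1 ≤ k) : Function.Injective (qv n k) := by
  intro a b hab
  have := congrFun hab ⟨1, by omega⟩
  simp only [qv] at this
  rw [pow_one, pow_one] at this
  exact Fin.ext (Nat.cast_injective this)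

lemma rowMem (hk : 1 ≤ k) (hkn : k + 1 ≤ n) {G : SimpleGraph (Fin n)}
    (hG : IsKSat G (k + 2)) (u v : Fin n) (huv : u ≠ v) :
    rw' n k u v ∈ Submodule.span ℝ (rowE n k '' G.edgeSet) := by
  classical
  by_cases hadj : G.Adj u v
  · exact Submodule.subset_span ⟨s(u, v), G.mem_edgeSet.mpr hadj, rfl⟩
  obtain ⟨t, htcard, hut, hvt, hadjt⟩ := clique_extract hG.1 (hG.2 u v huv hadj)
  -- a nontrivial linear relation on the k+2 moment vectors of t
  have himg : (t.image (qv n k)).card = k + 2 := by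
    rw [Finset.card_image_of_injective _ (qv_injective hk), htcard]
  have hrel := Module.exists_nontrivial_relation_of_finrank_lt_card
    (R := ℝ) (M := Fin (k+1) → ℝ) (t := t.image (qv n k))
    (by rw [himg, Module.finrank_fintype_fun_eq_card, Fintype.card_fin]; omega)
  obtain ⟨f, hfsum, x0, hx0mem, hx0⟩ := hrel
  set c : Fin n → ℝ := fun i => f (qv n k i) with hc
  have hcsum : ∑ i ∈ t, c i • qv n k i = 0 := by
    rw [← hfsum, Finset.sum_image (fun a _ b _ h => qv_injective hk h)]
  have hex : ∃ i ∈ t, c i ≠ 0 := by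
    obtain ⟨i, hit, hqi⟩ := Finset.mem_image.mp hx0mem
    exact ⟨i, hit, by rw [hc]; simp only []; rw [hqi]; exact hx0⟩
  have hall : ∀ i ∈ t, c i ≠ 0 := by
    intro j hjt hcj
    have hsum' : ∑ i ∈ t.erase j, c i • qv n k i = 0 := by
      have h' := Finset.add_sum_erase t (fun i => c i • qv n k i) hjt
      rw [hcj, zero_smul, zero_add] at h'
      rw [h', hcsum]
    have hzero := rel0 k hkn (t.erase j)
      (by rw [Finset.card_erase_of_mem hjt, htcard]; omega) _ hsum'
    obtain ⟨i, hit, hci⟩ := hex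
    by_cases hij : i = j
    · exact hci (hij ▸ hcj)
    · exact hci (hzero i (Finset.mem_erase.mpr ⟨hij, hit⟩))
  have hc0 : ∑ i ∈ t, c i = 0 := by
    have := congrFun hcsum ⟨0, by omega⟩
    rw [Finset.sum_apply] at this
    simp only [Pi.smul_apply, qv, smul_eq_mul] at this
    simpa using this
  -- the stress identity
  have hstress : ∑ p ∈ t ×ˢ t, (c p.1 * c p.2) • rw' n k p.1 p.2 = 0 := by
    funext w
    rw [Finset.sum_apply]
    have hterm : ∀ p : Fin n × Fin n, p ∈ t ×ˢ t →
        ((c p.1 * c p.2) • rw' n k p.1 p.2) w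
          = (if w = p.1 then (c p.1 * c p.2) • (qv n k p.1 - qv n k p.2) else 0)
            + (if w = p.2 then (c p.1 * c p.2) • (qv n k p.2 - qv n k p.1) else 0) := by
      intro p _
      rw [Pi.smul_apply, rw'_apply, smul_add]
      congr 1 <;> split <;> simp
    rw [Finset.sum_congr rfl hterm, Finset.sum_add_distrib]
    have hinner : ∀ z : Fin n, z ∈ t → ∑ b ∈ t, c b • (qv n k z - qv n k b) = 0 := by
      intro z _
      calc ∑ b ∈ t, c b • (qv n k z - qv n k b)
          = (∑ b ∈ t, c b) • qv n k z - ∑ b ∈ t, c b • qv n k b := by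
            rw [Finset.sum_smul, ← Finset.sum_sub_distrib]
            exact Finset.sum_congr rfl (fun b _ => smul_sub _ _ _)
        _ = 0 := by rw [hcsum, hc0, zero_smul, sub_zero]
    have pull : ∀ (P : Prop) [Decidable P] (g : Fin n → (Fin (k+1) → ℝ)),
        (∑ b ∈ t, if P then g b else 0) = if P then ∑ b ∈ t, g b else 0 := by
      intros P _ g; split <;> simp
    have h4 : ∑ p ∈ t ×ˢ t, (if w = p.1 then (c p.1 * c p.2) • (qv n k p.1 - qv n k p.2) else 0)
        = 0 := by
      rw [Finset.sum_product]
      have hin : ∀ a ∈ t, (∑ b ∈ t, if w = a then (c a * c b) • (qv n k a - qv n k b) else 0)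
          = if w = a then ∑ b ∈ t, (c a * c b) • (qv n k a - qv n k b) else 0 :=
        fun a _ => pull _ _
      rw [Finset.sum_congr rfl hin,
        Finset.sum_ite_eq t w (fun a => ∑ b ∈ t, (c a * c b) • (qv n k a - qv n k b))]
      split
      · rename_i hwt
        have : ∑ b ∈ t, (c w * c b) • (qv n k w - qv n k b)
            = c w • ∑ b ∈ t, c b • (qv n k w - qv n k b) := by
          rw [Finset.smul_sum]
          exact Finset.sum_congr rfl (fun b _ => by rw [mul_smul])
        rw [this, hinner w hwt, smul_zero]
      · rfl
    have h5 : ∑ p ∈ t ×ˢ t, (if w = p.2 then (c p.1 * c p.2) • (qv n k p.2 - qv n k p.1) else 0)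
        = 0 := by
      rw [Finset.sum_product]
      have hin : ∀ a ∈ t, (∑ b ∈ t, if w = b then (c a * c b) • (qv n k b - qv n k a) else 0)
          = if w ∈ t then (c a * c w) • (qv n k w - qv n k a) else 0 :=
        fun a _ => Finset.sum_ite_eq t w (fun b => (c a * c b) • (qv n k b - qv n k a))
      rw [Finset.sum_congr rfl hin, pull _ _]
      split
      · rename_i hwt
        have : ∑ a ∈ t, (c a * c w) • (qv n k w - qv n k a)
            = c w • ∑ a ∈ t, c a • (qv n k w - qv n k a) := by
          rw [Finset.smul_sum]
          exact Finset.sum_congr rfl (fun b _ => by rw [mul_comm, mul_smul])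
        rw [this, hinner w hwt, smul_zero]
      · rfl
    rw [h4, h5]
    simp
  -- extract the row of (u,v)
  set T := Submodule.span ℝ (rowE n k '' G.edgeSet) with hT
  have hp0 : (u, v) ∈ t ×ˢ t := Finset.mem_product.mpr ⟨hut, hvt⟩
  have hp1 : (v, u) ∈ (t ×ˢ t).erase (u, v) := by
    refine Finset.mem_erase.mpr ⟨?_, Finset.mem_product.mpr ⟨hvt, hut⟩⟩
    intro h
    exact huv (show u = v from congrArg Prod.snd h)
  have hsplit := Finset.add_sum_erase (t ×ˢ t) (fun p => (c p.1 * c p.2) • rw' n k p.1 p.2) hp0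
  have hsplit2 := Finset.add_sum_erase ((t ×ˢ t).erase (u, v))
    (fun p => (c p.1 * c p.2) • rw' n k p.1 p.2) hp1
  have hR : ∑ p ∈ ((t ×ˢ t).erase (u, v)).erase (v, u),
      (c p.1 * c p.2) • rw' n k p.1 p.2 ∈ T := by
    apply Submodule.sum_mem
    intro p hp
    have hp' := Finset.mem_erase.mp hp
    have hp'' := Finset.mem_erase.mp hp'.2
    have hpt := Finset.mem_product.mp hp''.2
    by_cases hab : p.1 = p.2
    · rw [hab, rw'_self, smul_zero]
      exact Submodule.zero_mem T
    · have hadjp : G.Adj p.1 p.2 := by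
        apply hadjt p.1 hpt.1 p.2 hpt.2 hab
        · intro h
          exact hp''.1 (Prod.ext h.1 h.2)
        · intro h
          exact hp'.1 (Prod.ext h.1 h.2)
      exact Submodule.smul_mem T _
        (Submodule.subset_span ⟨s(p.1, p.2), G.mem_edgeSet.mpr hadjp, rfl⟩)
  have hcuv : c u * c v ≠ 0 := mul_ne_zero (hall u hut) (hall v hvt)
  have hkey : (2 * (c u * c v)) • rw' n k u v
      = - ∑ p ∈ ((t ×ˢ t).erase (u, v)).erase (v, u), (c p.1 * c p.2) • rw' n k p.1 p.2 := by
    have e1 : (c u * c v) • rw' n k u v + ((c v * c u) • rw' n k v u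
        + ∑ p ∈ ((t ×ˢ t).erase (u, v)).erase (v, u), (c p.1 * c p.2) • rw' n k p.1 p.2) = 0 := by
      rw [hsplit2, hsplit]
      exact hstress
    rw [← rw'_symm k u v, mul_comm (c v) (c u)] at e1
    rw [two_mul, add_smul]
    linear_combination (norm := abel) e1
  have : rw' n k u v = (2 * (c u * c v))⁻¹ • ((2 * (c u * c v)) • rw' n k u v) := by
    rw [smul_smul, inv_mul_cancel₀ (by exact mul_ne_zero two_ne_zero hcuv), one_smul]
  rw [this, hkey]
  exact Submodule.smul_mem T _ (Submodule.neg_mem T hR)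

instance : DecidableRel (sGraph n k).Adj := fun i j =>
  show Decidable (i ≠ j ∧ ((i : ℕ) < k ∨ (j : ℕ) < k)) from inferInstance

lemma sGraph_adj {i j : Fin n} :
    (sGraph n k).Adj i j ↔ i ≠ j ∧ ((i : ℕ) < k ∨ (j : ℕ) < k) := Iff.rfl

lemma ehm (hk : 2 ≤ k) (hkn : k + 2 ≤ n) {G : SimpleGraph (Fin n)} [DecidableRel G.Adj]
    (hG : IsKSat G (k + 2)) :
    Fintype.card {p : Fin n × Fin n // vp n k p} ≤ G.edgeFinset.card := by
  classical
  set T := Submodule.span ℝ (rowE n k '' G.edgeSet) with hT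
  have hmem : ∀ p : {p : Fin n × Fin n // vp n k p}, rw' n k p.1.1 p.1.2 ∈ T := fun p =>
    rowMem (by omega) (by omega) hG _ _ (ne_of_lt p.2.1)
  have hind := indepRows (n := n) (k := k) hkn
  have hind' : LinearIndependent ℝ (fun p : {p : Fin n × Fin n // vp n k p} =>
      (⟨rw' n k p.1.1 p.1.2, hmem p⟩ : T)) := by
    apply LinearIndependent.of_comp T.subtype
    exact hind
  have h1 : Fintype.card {p : Fin n × Fin n // vp n k p} ≤ Module.finrank ℝ T :=
    hind'.fintype_card_le_finrank
  have himg : rowE n k '' G.edgeSet = ↑(G.edgeFinset.image (rowE n k)) := by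
    rw [Finset.coe_image, SimpleGraph.coe_edgeFinset]
  have h2 : Module.finrank ℝ T ≤ (G.edgeFinset.image (rowE n k)).card := by
    rw [hT, himg]
    exact finrank_span_finset_le_card (R := ℝ) _
  exact h1.trans (h2.trans (Finset.card_image_le))

lemma cardI : Fintype.card {p : Fin n × Fin n // vp n k p} = (sGraph n k).edgeFinset.card := by
  classical
  rw [Fintype.card_subtype]
  apply Finset.card_bij (fun (p : Fin n × Fin n) (_ : p ∈ univ.filter (vp n k)) => s(p.1, p.2))
  · intro p hp
    have hp' := (Finset.mem_filter.mp hp).2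
    rw [SimpleGraph.mem_edgeFinset, SimpleGraph.mem_edgeSet]
    exact sGraph_adj.mpr ⟨ne_of_lt hp'.1, hp'.2⟩
  · intro p hp q hq hpq
    have hp' := (Finset.mem_filter.mp hp).2
    have hq' := (Finset.mem_filter.mp hq).2
    rcases Sym2.eq_iff.mp hpq with ⟨h1, h2⟩ | ⟨h1, h2⟩
    · exact Prod.ext h1 h2
    · exfalso
      have := hp'.1
      rw [h1, h2] at this
      exact absurd (lt_trans this hq'.1) (lt_irrefl _)
  · intro e he
    induction e with
    | _ x y =>
      rw [SimpleGraph.mem_edgeFinset, SimpleGraph.mem_edgeSet] at he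
      obtain ⟨hne, hcond⟩ := sGraph_adj.mp he
      rcases lt_or_gt_of_ne hne with h | h
      · exact ⟨(x, y), Finset.mem_filter.mpr ⟨Finset.mem_univ _, h, hcond⟩, rfl⟩
      · exact ⟨(y, x), Finset.mem_filter.mpr ⟨Finset.mem_univ _, h, hcond.symm⟩, Sym2.eq_swap⟩

lemma sGraph_degree_core (hkn : k ≤ n) (v : Fin n) (hv : (v : ℕ) < k) :
    (sGraph n k).degree v = n - 1 := by
  have : (sGraph n k).neighborFinset v = univ.erase v := by
    ext u
    rw [SimpleGraph.mem_neighborFinset, Finset.mem_erase]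
    constructor
    · intro h
      exact ⟨(sGraph_adj.mp h).1.symm, Finset.mem_univ _⟩
    · intro h
      exact sGraph_adj.mpr ⟨Ne.symm h.1, Or.inl hv⟩
  rw [SimpleGraph.degree, this, Finset.card_erase_of_mem (Finset.mem_univ v),
    Finset.card_univ, Fintype.card_fin]

lemma sGraph_degree_noncore (hkn : k ≤ n) (v : Fin n) (hv : ¬ (v : ℕ) < k) :
    (sGraph n k).degree v = k := by
  have : (sGraph n k).neighborFinset v = univ.filter (fun i : Fin n => (i : ℕ) < k) := by
    ext u
    rw [SimpleGraph.mem_neighborFinset, Finset.mem_filter]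
    constructor
    · intro h
      rcases (sGraph_adj.mp h).2 with h' | h'
      · exact absurd h' hv
      · exact ⟨Finset.mem_univ _, h'⟩
    · intro h
      refine sGraph_adj.mpr ⟨?_, Or.inr h.2⟩
      intro heq
      exact hv (heq ▸ h.2)
  rw [SimpleGraph.degree, this, cardC hkn]

lemma sGraph_handshake (hkn : k ≤ n) :
    2 * (sGraph n k).edgeFinset.card = k * (n - 1) + (n - k) * k := by
  rw [← SimpleGraph.sum_degrees_eq_twice_card_edges]
  have : ∀ v : Fin n, (sGraph n k).degree v = if (v : ℕ) < k then n - 1 else k := by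
    intro v
    split
    · exact sGraph_degree_core hkn v ‹_›
    · exact sGraph_degree_noncore hkn v ‹_›
  rw [Finset.sum_congr rfl (fun v _ => this v)]
  rw [Finset.sum_ite, Finset.sum_const, Finset.sum_const, cardC hkn]
  have : (univ.filter (fun i : Fin n => ¬ (i : ℕ) < k)).card = n - k := by
    have h := Finset.card_filter_add_card_filter_not
      (s := (univ : Finset (Fin n))) (p := fun i : Fin n => (i : ℕ) < k)
    rw [cardC hkn, Finset.card_univ, Fintype.card_fin] at h
    omega
  rw [this, smul_eq_mul, smul_eq_mul]


lemma matchcount (G : SimpleGraph (Fin n)) [DecidableRel G.Adj] :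
    numMatchings G 2 + ∑ v : Fin n, (G.degree v).choose 2
      = (G.edgeFinset.card).choose 2 := by
  classical
  set dp : Finset (Sym2 (Fin n)) → Prop :=
    fun M => ∀ e ∈ M, ∀ f ∈ M, e ≠ f → ∀ v, v ∈ e → v ∉ f with hdp
  have h1 : numMatchings G 2 = ((G.edgeFinset.powersetCard 2).filter dp).card := by
    rw [numMatchings, ← Set.ncard_coe_finset]
    congr 1
    ext M
    simp only [Set.mem_setOf_eq, Finset.coe_filter, Finset.mem_powersetCard,
      SimpleGraph.mem_edgeFinset, hdp]
    constructor
    · rintro ⟨hcard, hsub, hdisj⟩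
      exact ⟨⟨fun e he => (SimpleGraph.mem_edgeFinset).mpr (hsub e he), hcard⟩, hdisj⟩
    · rintro ⟨⟨hsub, hcard⟩, hdisj⟩
      exact ⟨hcard, fun e he => (SimpleGraph.mem_edgeFinset).mp (hsub he), hdisj⟩
  have h2 : ((G.edgeFinset.powersetCard 2).filter dp).card
      + ((G.edgeFinset.powersetCard 2).filter (fun M => ¬ dp M)).card
      = (G.edgeFinset.card).choose 2 := by
    rw [Finset.card_filter_add_card_filter_not, Finset.card_powersetCard]
  have h3 : (G.edgeFinset.powersetCard 2).filter (fun M => ¬ dp M)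
      = univ.biUnion (fun v => (G.incidenceFinset v).powersetCard 2) := by
    ext M
    simp only [Finset.mem_filter, Finset.mem_biUnion, Finset.mem_powersetCard, Finset.mem_univ,
      true_and, hdp]
    constructor
    · rintro ⟨⟨hsub, hcard⟩, hnd⟩
      push_neg at hnd
      obtain ⟨e, he, f, hf, hef, v, hve, hvf⟩ := hnd
      refine ⟨v, ?_, hcard⟩
      have hMef : M = {e, f} := by
        apply (Finset.eq_of_subset_of_card_le ?_ ?_).symm
        · intro x hx
          rcases Finset.mem_insert.mp hx with h | h
          · exact h ▸ he
          · exact (Finset.mem_singleton.mp h) ▸ hf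
        · rw [hcard, Finset.card_insert_of_notMem (by simp [hef]), Finset.card_singleton]
      rw [hMef]
      intro x hx
      rcases Finset.mem_insert.mp hx with h | h
      · subst h
        rw [SimpleGraph.mem_incidenceFinset]
        exact ⟨(SimpleGraph.mem_edgeFinset).mp (hsub he), hve⟩
      · rw [Finset.mem_singleton.mp h, SimpleGraph.mem_incidenceFinset]
        exact ⟨(SimpleGraph.mem_edgeFinset).mp (hsub hf), hvf⟩
    · rintro ⟨v, hsub, hcard⟩
      have hsub' : M ⊆ G.edgeFinset := fun e he => by
        have := hsub he
        rw [SimpleGraph.mem_incidenceFinset] at this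
        exact (SimpleGraph.mem_edgeFinset).mpr this.1
      refine ⟨⟨hsub', hcard⟩, ?_⟩
      obtain ⟨e, f, hef, hMef⟩ := Finset.card_eq_two.mp hcard
      intro hd
      have heM : e ∈ M := by rw [hMef]; exact Finset.mem_insert_self _ _
      have hfM : f ∈ M := by rw [hMef]; exact Finset.mem_insert_of_mem (Finset.mem_singleton_self f)
      have hve : v ∈ e := by
        have := hsub heM
        rw [SimpleGraph.mem_incidenceFinset] at this
        exact this.2
      have hvf : v ∈ f := by
        have := hsub hfM
        rw [SimpleGraph.mem_incidenceFinset] at this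
        exact this.2
      exact hd e heM f hfM hef v hve hvf
  have h4 : (univ.biUnion (fun v => (G.incidenceFinset v).powersetCard 2)).card
      = ∑ v : Fin n, (G.degree v).choose 2 := by
    rw [Finset.card_biUnion]
    · apply Finset.sum_congr rfl
      intro v _
      rw [Finset.card_powersetCard, SimpleGraph.card_incidenceFinset_eq_degree]
    · intro v _ w _ hvw
      rw [Function.onFun, Finset.disjoint_left]
      intro M hMv hMw
      rw [Finset.mem_powersetCard] at hMv hMw
      obtain ⟨e, f, hef, hMef⟩ := Finset.card_eq_two.mp hMv.2
      have heM : e ∈ M := by rw [hMef]; exact Finset.mem_insert_self _ _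
      have hfM : f ∈ M := by rw [hMef]; exact Finset.mem_insert_of_mem (Finset.mem_singleton_self f)
      have hev : v ∈ e ∧ w ∈ e := by
        have h1 := hMv.1 heM
        have h2 := hMw.1 heM
        rw [SimpleGraph.mem_incidenceFinset] at h1 h2
        exact ⟨h1.2, h2.2⟩
      have hfv : v ∈ f ∧ w ∈ f := by
        have h1 := hMv.1 hfM
        have h2 := hMw.1 hfM
        rw [SimpleGraph.mem_incidenceFinset] at h1 h2
        exact ⟨h1.2, h2.2⟩
      exact hef (Sym2.eq_of_ne_mem hvw hev.1 hev.2 hfv.1 hfv.2)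
  rw [h1, ← h2, h3, h4]


lemma core_ineq (n k m m1 : ℕ) (d : Fin n → ℕ) (hk : 2 ≤ k) (hkn : k + 2 ≤ n)
    (hm1 : 2 * m1 = k * (n - 1) + (n - k) * k)
    (hmm : m1 ≤ m)
    (hdhigh : ∀ v, d v ≤ n - 1)
    (hdlow : ∀ v, k ≤ d v)
    (hsum : ∑ v, d v = 2 * m) :
    ((m1 : ℤ) * (m1 - 1) - (k : ℤ) * ((n : ℤ) - 1) * ((n : ℤ) - 2)
        - ((n : ℤ) - k) * k * (k - 1))
      + ((m : ℤ) - m1) + ∑ v, ((d v : ℤ) - k) * ((n : ℤ) - 1 - d v)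
      ≤ (m : ℤ) * (m - 1) - ∑ v, (d v : ℤ) * ((d v : ℤ) - 1) := by
  set N : ℤ := (n : ℤ) with hN
  set K : ℤ := (k : ℤ) with hK
  set L : ℤ := N - 1 - K with hL
  have hNK : K + 2 ≤ N := by rw [hN, hK]; omega
  have hK2 : 2 ≤ K := by rw [hK]; omega
  have hLpos : 0 < L := by omega
  have hm1' : 2 * (m1 : ℤ) = K * (N - 1) + (N - K) * K := by
    have h1 : ((n - 1 : ℕ) : ℤ) = N - 1 := by rw [hN]; omega
    have h2 : ((n - k : ℕ) : ℤ) = N - K := by rw [hN, hK]; omega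
    calc 2 * (m1 : ℤ) = ((2 * m1 : ℕ) : ℤ) := by push_cast; ring
    _ = ((k * (n - 1) + (n - k) * k : ℕ) : ℤ) := by rw [hm1]
    _ = K * (N - 1) + (N - K) * K := by push_cast [h1, h2]; ring
  have hsum' : ∑ v, (d v : ℤ) = 2 * (m : ℤ) := by
    calc ∑ v, (d v : ℤ) = ((∑ v, d v : ℕ) : ℤ) := by push_cast; ring
    _ = 2 * (m : ℤ) := by rw [hsum]; push_cast; ring
  have hdh' : ∀ v, (d v : ℤ) ≤ N - 1 := by
    intro v
    have := hdhigh v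
    rw [hN]; omega
  have hdl' : ∀ v, K ≤ (d v : ℤ) := fun v => by rw [hK]; exact_mod_cast hdlow v
  -- sum identity
  have hper : ∀ v : Fin n, L * ((d v : ℤ) * (d v - 1)) + L * (((d v : ℤ) - K) * (N - 1 - d v))
      = (N - 1 - d v) * K * (K - 1) + ((d v : ℤ) - K) * (N - 1) * (N - 2) := by
    intro v; rw [hL]; ring
  have hsumid : L * (∑ v, (d v : ℤ) * (d v - 1)) + L * (∑ v, ((d v : ℤ) - K) * (N - 1 - d v))
      = K * (K - 1) * (N * (N - 1) - 2 * m) + (N - 1) * (N - 2) * (2 * m - N * K) := by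
    have h1 : ∑ v, (L * ((d v : ℤ) * (d v - 1)) + L * (((d v : ℤ) - K) * (N - 1 - d v)))
        = ∑ v, ((N - 1 - d v) * K * (K - 1) + ((d v : ℤ) - K) * (N - 1) * (N - 2)) :=
      Finset.sum_congr rfl (fun v _ => hper v)
    rw [Finset.sum_add_distrib, ← Finset.mul_sum, ← Finset.mul_sum] at h1
    rw [Finset.sum_add_distrib] at h1
    have h2 : ∑ v, (N - 1 - (d v : ℤ)) * K * (K - 1) = (N * (N - 1) - 2 * m) * (K * (K - 1)) := by
      rw [← Finset.sum_mul, ← Finset.sum_mul, Finset.sum_sub_distrib, Finset.sum_const,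
        Finset.card_univ, Fintype.card_fin, hsum']
      push_cast
      ring
    have h3 : ∑ v, ((d v : ℤ) - K) * (N - 1) * (N - 2) = (2 * m - N * K) * ((N - 1) * (N - 2)) := by
      rw [← Finset.sum_mul, ← Finset.sum_mul, Finset.sum_sub_distrib, Finset.sum_const,
        Finset.card_univ, Fintype.card_fin, hsum']
      push_cast
      ring
    rw [h2, h3] at h1
    rw [h1]; ring
  set S : ℤ := ∑ v, ((d v : ℤ) - K) * (N - 1 - d v) with hS
  have hSnn : 0 ≤ S := Finset.sum_nonneg (fun v _ =>
    mul_nonneg (by have := hdl' v; omega) (by have := hdh' v; omega))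
  have hdm : (0 : ℤ) ≤ (m : ℤ) - m1 := by
    have : (m1 : ℤ) ≤ m := by exact_mod_cast hmm
    omega
  have hA : 0 ≤ (m : ℤ) + m1 + 2 - 2 * N - 2 * K := by
    nlinarith [mul_nonneg (by omega : (0:ℤ) ≤ K - 2) (by omega : (0:ℤ) ≤ K + 1),
      mul_nonneg (by omega : (0:ℤ) ≤ N - K - 2) (by omega : (0:ℤ) ≤ K - 1)]
  -- multiply goal by L
  rw [← mul_le_mul_iff_of_pos_left hLpos]
  have hexp : L * ((m : ℤ) * (m - 1) - ∑ v, (d v : ℤ) * (d v - 1))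
      = L * ((m : ℤ) * (m - 1)) - (K * (K - 1) * (N * (N - 1) - 2 * m)
          + (N - 1) * (N - 2) * (2 * m - N * K)) + L * S := by
    rw [mul_sub]
    linarith [hsumid]
  have key : L * ((m : ℤ) * (↑m - 1)) - (K * (K - 1) * (N * (N - 1) - 2 * ↑m)
        + (N - 1) * (N - 2) * (2 * ↑m - N * K))
      = L * ((m1 : ℤ) * (↑m1 - 1) - K * (N - 1) * (N - 2) - (N - K) * K * (K - 1)
          + ((m : ℤ) - ↑m1))
        + L * ((m : ℤ) - ↑m1) * ((m : ℤ) + ↑m1 + 2 - 2 * N - 2 * K) := by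
    linear_combination (-(L * (N + K - 2))) * hm1'
  rw [hexp]
  nlinarith [key, mul_nonneg (mul_nonneg hLpos.le hdm) hA]


lemma matching_map {V W : Type*} [DecidableEq V] [DecidableEq W] {G : SimpleGraph V}
    {H : SimpleGraph W} (f : G ≃g H) {kk : ℕ} (M : Finset (Sym2 V))
    (hM : M.card = kk ∧ (∀ e ∈ M, e ∈ G.edgeSet) ∧
      ∀ e ∈ M, ∀ g ∈ M, e ≠ g → ∀ v, v ∈ e → v ∉ g) :
    (M.image (Sym2.map f)).card = kk ∧ (∀ e ∈ M.image (Sym2.map f), e ∈ H.edgeSet) ∧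
      ∀ e ∈ M.image (Sym2.map f), ∀ g ∈ M.image (Sym2.map f), e ≠ g →
        ∀ v, v ∈ e → v ∉ g := by
  obtain ⟨hcard, hedge, hdisj⟩ := hM
  have hinj : Function.Injective (Sym2.map f) := Sym2.map.injective f.injective
  have hmapedge : ∀ e' ∈ G.edgeSet, Sym2.map f e' ∈ H.edgeSet := by
    intro e' he'
    induction e' with
    | _ a b =>
      rw [Sym2.map_pair_eq]
      rw [SimpleGraph.mem_edgeSet] at he' ⊢
      exact f.map_adj_iff.mpr he'
  refine ⟨by rw [Finset.card_image_of_injective _ hinj, hcard], ?_, ?_⟩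
  · intro e he
    obtain ⟨e', he', rfl⟩ := Finset.mem_image.mp he
    exact hmapedge e' (hedge e' he')
  · intro e he g hg hne v hve hvg
    obtain ⟨e', he', rfl⟩ := Finset.mem_image.mp he
    obtain ⟨g', hg', rfl⟩ := Finset.mem_image.mp hg
    have hne' : e' ≠ g' := fun h => hne (h ▸ rfl)
    obtain ⟨a, hae, hfa⟩ := Sym2.mem_map.mp hve
    obtain ⟨b, hbg, hfb⟩ := Sym2.mem_map.mp hvg
    have hab : a = b := f.injective (by rw [hfa, hfb])
    exact hdisj e' he' g' hg' hne' a hae (hab ▸ hbg)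

lemma numMatchings_iso {V W : Type*} [Fintype V] [Fintype W] [DecidableEq V] [DecidableEq W]
    {G : SimpleGraph V} {H : SimpleGraph W} (f : G ≃g H) (kk : ℕ) :
    numMatchings G kk = numMatchings H kk := by
  classical
  have hinj : Function.Injective (fun M : Finset (Sym2 V) => M.image (Sym2.map f)) :=
    Finset.image_injective (Sym2.map.injective f.injective)
  rw [numMatchings, numMatchings]
  rw [← Set.ncard_image_of_injective _ hinj]
  congr 1
  ext N
  constructor
  · rintro ⟨M, hM, rfl⟩
    exact matching_map f M hM
  · intro hN
    refine ⟨N.image (Sym2.map f.symm), matching_map f.symm N hN, ?_⟩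
    dsimp only
    rw [Finset.image_image]
    have : (Sym2.map ⇑f) ∘ (Sym2.map ⇑(f.symm)) = id := by
      funext e
      rw [Function.comp_apply, Sym2.map_map]
      have : (⇑f ∘ ⇑f.symm) = id := by funext x; simp
      rw [this, Sym2.map_id, id_eq]
    rw [this, Finset.image_id]


lemma struct_iso (hk : 2 ≤ k) (hkn : k + 2 ≤ n) {G : SimpleGraph (Fin n)} [DecidableRel G.Adj]
    (hdeg : ∀ v, G.degree v = k ∨ G.degree v = n - 1)
    (hm : 2 * G.edgeFinset.card = k * (n - 1) + (n - k) * k) :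
    Nonempty (G ≃g sGraph n k) := by
  classical
  set A : Finset (Fin n) := univ.filter (fun v => G.degree v = n - 1) with hA
  have hAdeg : ∀ v ∈ A, G.degree v = n - 1 := fun v hv => (Finset.mem_filter.mp hv).2
  have hAdeg' : ∀ v, v ∉ A → G.degree v = k := by
    intro v hv
    rcases hdeg v with h | h
    · exact h
    · exact absurd (show v ∈ A by rw [hA]; exact Finset.mem_filter.mpr ⟨Finset.mem_univ v, h⟩) hv
  have hAcard : A.card = k := by
    have hsplit : ∑ v ∈ A, G.degree v + ∑ v ∈ univ.filter (fun v => v ∉ A), G.degree v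
        = ∑ v : Fin n, G.degree v := by
      rw [hA]
      have := Finset.sum_filter_add_sum_filter_not (univ : Finset (Fin n))
        (fun v => G.degree v = n - 1) (fun v => G.degree v)
      convert this using 3
      simp [hA]
    have h1 : ∑ v ∈ A, G.degree v = A.card * (n - 1) := by
      rw [Finset.sum_congr rfl hAdeg, Finset.sum_const, smul_eq_mul]
    have h2 : ∑ v ∈ univ.filter (fun v => v ∉ A), G.degree v
        = (n - A.card) * k := by
      rw [Finset.sum_congr rfl (fun v hv => hAdeg' v (Finset.mem_filter.mp hv).2),
        Finset.sum_const, smul_eq_mul]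
      congr 1
      have := Finset.card_filter_add_card_filter_not
        (s := (univ : Finset (Fin n))) (p := fun v => v ∈ A)
      rw [Finset.card_univ, Fintype.card_fin] at this
      have hAA : (univ.filter (fun v => v ∈ A)) = A := by
        ext v; simp
      rw [hAA] at this
      omega
    have hhs : ∑ v : Fin n, G.degree v = 2 * G.edgeFinset.card :=
      SimpleGraph.sum_degrees_eq_twice_card_edges G
    have heq : A.card * (n - 1) + (n - A.card) * k = k * (n - 1) + (n - k) * k := by
      rw [← h1, ← h2, hsplit, hhs, hm]
    -- conclude A.card = k
    have hAn : A.card ≤ n := by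
      have := Finset.card_le_univ A
      simpa using this
    have heqz : ((A.card : ℤ) - k) * ((n : ℤ) - 1 - k) = 0 := by
      have h1' : ((A.card * (n - 1) + (n - A.card) * k : ℕ) : ℤ)
          = ((k * (n - 1) + (n - k) * k : ℕ) : ℤ) := by exact_mod_cast heq
      push_cast [Nat.cast_sub (by omega : 1 ≤ n), Nat.cast_sub hAn,
        Nat.cast_sub (by omega : k ≤ n)] at h1'
      linear_combination h1'
    rcases mul_eq_zero.mp heqz with h | h
    · omega
    · exfalso; omega
  have hdom : ∀ v ∈ A, ∀ u, u ≠ v → G.Adj v u := by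
    intro v hv u hu
    have hdv := hAdeg v hv
    have hsub : G.neighborFinset v ⊆ univ.erase v := by
      intro x hx
      rw [SimpleGraph.mem_neighborFinset] at hx
      exact Finset.mem_erase.mpr ⟨(G.ne_of_adj hx).symm, Finset.mem_univ _⟩
    have hcard : (univ.erase v).card ≤ (G.neighborFinset v).card := by
      rw [Finset.card_erase_of_mem (Finset.mem_univ v), Finset.card_univ, Fintype.card_fin,
        SimpleGraph.card_neighborFinset_eq_degree, hdv]
    have := Finset.eq_of_subset_of_card_le hsub hcard
    have hmem : u ∈ G.neighborFinset v := by
      rw [this]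
      exact Finset.mem_erase.mpr ⟨hu, Finset.mem_univ _⟩
    exact (SimpleGraph.mem_neighborFinset _ _ _).mp hmem
  have hnb : ∀ v, v ∉ A → G.neighborFinset v = A := by
    intro v hv
    have hsub : A ⊆ G.neighborFinset v := by
      intro a ha
      have hav : a ≠ v := fun h => hv (h ▸ ha)
      rw [SimpleGraph.mem_neighborFinset]
      exact (hdom a ha v (fun h => hav h.symm)).symm
    have hcard : (G.neighborFinset v).card ≤ A.card := by
      rw [SimpleGraph.card_neighborFinset_eq_degree, hAdeg' v hv, hAcard]
    exact (Finset.eq_of_subset_of_card_le hsub hcard).symm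
  have hadj_iff : ∀ u v, G.Adj u v ↔ (u ≠ v ∧ (u ∈ A ∨ v ∈ A)) := by
    intro u v
    constructor
    · intro h
      refine ⟨G.ne_of_adj h, ?_⟩
      by_contra hc
      push_neg at hc
      have := hnb u hc.1
      have hvmem : v ∈ G.neighborFinset u := (SimpleGraph.mem_neighborFinset _ _ _).mpr h
      rw [this] at hvmem
      exact hc.2 hvmem
    · rintro ⟨hne, h | h⟩
      · exact hdom u h v (fun h' => hne h'.symm)
      · exact (hdom v h u hne).symm
  set B : Finset (Fin n) := univ.filter (fun i : Fin n => (i : ℕ) < k) with hB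
  have hBcard : B.card = k := cardC (by omega)
  have c1 : Fintype.card {x : Fin n // x ∈ A} = Fintype.card {x : Fin n // x ∈ B} := by
    rw [Fintype.card_coe, Fintype.card_coe, hAcard, hBcard]
  have c2 : Fintype.card {x : Fin n // ¬ x ∈ A} = Fintype.card {x : Fin n // ¬ x ∈ B} := by
    rw [Fintype.card_subtype_compl, Fintype.card_subtype_compl, c1]
  set σ1 := Fintype.equivOfCardEq c1 with hσ1
  set σ2 := Fintype.equivOfCardEq c2 with hσ2
  set e : Fin n ≃ Fin n :=
    ((Equiv.sumCompl (· ∈ A)).symm.trans ((Equiv.sumCongr σ1 σ2).trans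
      (Equiv.sumCompl (· ∈ B)))) with he
  have hprop : ∀ v, (e v ∈ B) ↔ v ∈ A := by
    intro v
    by_cases hv : v ∈ A
    · have : e v = ↑(σ1 ⟨v, hv⟩) := by
        simp [he, Equiv.sumCompl_symm_apply_of_pos hv]
      rw [this]
      exact iff_of_true (σ1 ⟨v, hv⟩).2 hv
    · have : e v = ↑(σ2 ⟨v, hv⟩) := by
        simp [he, Equiv.sumCompl_symm_apply_of_neg hv]
      rw [this]
      exact iff_of_false (σ2 ⟨v, hv⟩).2 hv
  refine ⟨⟨e, ?_⟩⟩
  intro u v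
  show (sGraph n k).Adj (e u) (e v) ↔ G.Adj u v
  rw [sGraph_adj]
  rw [hadj_iff u v]
  constructor
  · rintro ⟨hne, h | h⟩
    · exact ⟨fun h' => hne (congrArg e h'), Or.inl ((hprop u).mp (Finset.mem_filter.mpr ⟨Finset.mem_univ _, h⟩))⟩
    · exact ⟨fun h' => hne (congrArg e h'), Or.inr ((hprop v).mp (Finset.mem_filter.mpr ⟨Finset.mem_univ _, h⟩))⟩
  · rintro ⟨hne, h | h⟩
    · refine ⟨fun h' => hne (e.injective h'), Or.inl ?_⟩
      have := (hprop u).mpr h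
      exact (Finset.mem_filter.mp this).2
    · refine ⟨fun h' => hne (e.injective h'), Or.inr ?_⟩
      have := (hprop v).mpr h
      exact (Finset.mem_filter.mp this).2



lemma two_choose (a : ℕ) : ((a.choose 2 : ℕ) : ℤ) * 2 = (a : ℤ) * ((a : ℤ) - 1) := by
  cases a with
  | zero => simp
  | succ b =>
    rw [Nat.choose_two_right]
    have heven : 2 ∣ (b + 1) * ((b + 1) - 1) := by
      have := (Nat.even_mul_succ_self b).two_dvd
      simpa [Nat.mul_comm] using this
    have h2 : (b + 1) * ((b + 1) - 1) / 2 * 2 = (b + 1) * ((b + 1) - 1) :=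
      Nat.div_mul_cancel heven
    have := congrArg (fun x : ℕ => (x : ℤ)) h2
    push_cast at this ⊢
    simpa using this

lemma sGraph_choose_sum (hkn : k + 2 ≤ n) :
    ∑ v : Fin n, ((((sGraph n k).degree v).choose 2 : ℕ) : ℤ) * 2
      = (k : ℤ) * ((n : ℤ) - 1) * ((n : ℤ) - 2) + ((n : ℤ) - k) * k * ((k : ℤ) - 1) := by
  have hdeg : ∀ v : Fin n, ((sGraph n k).degree v : ℤ) * (((sGraph n k).degree v : ℤ) - 1)
      = if (v : ℕ) < k then ((n : ℤ) - 1) * ((n : ℤ) - 2) else (k : ℤ) * ((k : ℤ) - 1) := by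
    intro v
    by_cases hv : (v : ℕ) < k
    · rw [sGraph_degree_core (by omega) v hv, if_pos hv]
      have h1 : ((n - 1 : ℕ) : ℤ) = (n : ℤ) - 1 := by omega
      rw [h1]; ring
    · rw [sGraph_degree_noncore (by omega) v hv, if_neg hv]
  have hstep : ∀ v : Fin n, ((((sGraph n k).degree v).choose 2 : ℕ) : ℤ) * 2
      = if (v : ℕ) < k then ((n : ℤ) - 1) * ((n : ℤ) - 2) else (k : ℤ) * ((k : ℤ) - 1) := by
    intro v
    rw [two_choose, hdeg v]
  rw [Finset.sum_congr rfl (fun v _ => hstep v), Finset.sum_ite, Finset.sum_const,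
    Finset.sum_const, cardC (by omega : k ≤ n)]
  have hcompl : ((univ : Finset (Fin n)).filter (fun i : Fin n => ¬ (i : ℕ) < k)).card
      = n - k := by
    have h := Finset.card_filter_add_card_filter_not
      (s := (univ : Finset (Fin n))) (p := fun i : Fin n => (i : ℕ) < k)
    rw [cardC (by omega : k ≤ n), Finset.card_univ, Fintype.card_fin] at h
    omega
  rw [hcompl]
  have h2 : ((n - k : ℕ) : ℤ) = (n : ℤ) - k := by omega
  rw [nsmul_eq_mul, nsmul_eq_mul]
  push_cast [h2]
  ring

/-- For `n ≥ s ≥ 4`, every `K_s`-saturated graph `G` on `n` vertices satisfies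
`N(M_2, G) ≥ N(M_2, S_{n,s-2})`, with equality iff `G ≅ S_{n,s-2}`. -/
theorem stmt_19 (n s : ℕ) (hs : 4 ≤ s) (hn : s ≤ n) (G : SimpleGraph (Fin n))
    (hG : IsKSat G s) :
    numMatchings (sGraph n (s - 2)) 2 ≤ numMatchings G 2 ∧
    (numMatchings G 2 = numMatchings (sGraph n (s - 2)) 2 ↔
      Nonempty (G ≃g sGraph n (s - 2))) := by
  classical
  obtain ⟨k, rfl⟩ : ∃ k, s = k + 2 := ⟨s - 2, by omega⟩
  have hred : k + 2 - 2 = k := by omega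
  rw [hred]
  have hk : 2 ≤ k := by omega
  have hkn : k + 2 ≤ n := hn
  letI : DecidableRel G.Adj := Classical.decRel _
  set m := G.edgeFinset.card with hmdef
  set m1 := (sGraph n k).edgeFinset.card with hm1def
  have hm1 : 2 * m1 = k * (n - 1) + (n - k) * k := sGraph_handshake (by omega)
  have hmm : m1 ≤ m := by
    have h1 := ehm hk hkn hG
    have h2 := cardI (n := n) (k := k)
    omega
  have hdlow : ∀ v, k ≤ G.degree v := by
    intro v
    have := min_degree hG (by omega) (by omega) v
    omega
  have hdhigh : ∀ v, G.degree v ≤ n - 1 := by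
    intro v
    have := G.degree_lt_card_verts v
    rw [Fintype.card_fin] at this
    omega
  have hsum : ∑ v, G.degree v = 2 * m := by
    rw [hmdef]
    exact SimpleGraph.sum_degrees_eq_twice_card_edges G
  have hcore := core_ineq n k m m1 (fun v => G.degree v) hk hkn hm1 hmm hdhigh hdlow hsum
  -- integer versions of the counting identity
  have hmcG := matchcount G
  have hmcS := matchcount (sGraph n k)
  have hG2 : 2 * (numMatchings G 2 : ℤ)
      = (m : ℤ) * ((m : ℤ) - 1) - ∑ v, (G.degree v : ℤ) * ((G.degree v : ℤ) - 1) := by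
    have hcast := congrArg (fun x : ℕ => (x : ℤ) * 2) hmcG
    push_cast at hcast
    rw [add_mul] at hcast
    have hsum2 : (∑ v : Fin n, ((G.degree v).choose 2 : ℤ)) * 2
        = ∑ v : Fin n, (G.degree v : ℤ) * ((G.degree v : ℤ) - 1) := by
      rw [Finset.sum_mul]
      exact Finset.sum_congr rfl (fun v _ => two_choose (G.degree v))
    rw [hsum2] at hcast
    have hm2 : ((m.choose 2 : ℕ) : ℤ) * 2 = (m : ℤ) * ((m : ℤ) - 1) := two_choose m
    push_cast at hm2
    linarith [hcast, hm2]
  have hS2 : 2 * (numMatchings (sGraph n k) 2 : ℤ)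
      = (m1 : ℤ) * ((m1 : ℤ) - 1) - ((k : ℤ) * ((n : ℤ) - 1) * ((n : ℤ) - 2)
          + ((n : ℤ) - k) * k * ((k : ℤ) - 1)) := by
    have hcast := congrArg (fun x : ℕ => (x : ℤ) * 2) hmcS
    push_cast at hcast
    rw [add_mul] at hcast
    have hsum2 : (∑ v : Fin n, (((sGraph n k).degree v).choose 2 : ℤ)) * 2
        = (k : ℤ) * ((n : ℤ) - 1) * ((n : ℤ) - 2) + ((n : ℤ) - k) * k * ((k : ℤ) - 1) := by
      rw [Finset.sum_mul]
      have := sGraph_choose_sum (n := n) (k := k) hkn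
      push_cast at this ⊢
      exact this
    rw [hsum2] at hcast
    have hm2 : ((m1.choose 2 : ℕ) : ℤ) * 2 = (m1 : ℤ) * ((m1 : ℤ) - 1) := two_choose m1
    push_cast at hm2
    linarith [hcast, hm2]
  set S : ℤ := ∑ v, ((G.degree v : ℤ) - k) * ((n : ℤ) - 1 - G.degree v) with hSdef
  have hterm_nn : ∀ v ∈ (univ : Finset (Fin n)),
      0 ≤ ((G.degree v : ℤ) - k) * ((n : ℤ) - 1 - G.degree v) := by
    intro v _
    have h1 := hdlow v
    have h2 := hdhigh v
    have : (0 : ℤ) ≤ (G.degree v : ℤ) - k := by omega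
    have h3 : (0 : ℤ) ≤ (n : ℤ) - 1 - G.degree v := by omega
    exact mul_nonneg this h3
  have hSnn : 0 ≤ S := Finset.sum_nonneg hterm_nn
  have hdm : (0 : ℤ) ≤ (m : ℤ) - m1 := by
    have : (m1 : ℤ) ≤ m := by exact_mod_cast hmm
    omega
  have hchain : 2 * (numMatchings (sGraph n k) 2 : ℤ) + ((m : ℤ) - m1) + S
      ≤ 2 * (numMatchings G 2 : ℤ) := by
    rw [hG2, hS2]
    linarith [hcore]
  constructor
  · have : (numMatchings (sGraph n k) 2 : ℤ) ≤ (numMatchings G 2 : ℤ) := by linarith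
    exact_mod_cast this
  constructor
  · intro heq
    have heqz : (numMatchings G 2 : ℤ) = (numMatchings (sGraph n k) 2 : ℤ) := by
      exact_mod_cast heq
    have hzero : ((m : ℤ) - m1) + S ≤ 0 := by linarith
    have hmeq : (m : ℤ) = m1 := by linarith
    have hSzero : S = 0 := by linarith
    have hallzero' : ∀ v ∈ (univ : Finset (Fin n)),
        ((G.degree v : ℤ) - k) * ((n : ℤ) - 1 - G.degree v) = 0 :=
      (Finset.sum_eq_zero_iff_of_nonneg hterm_nn).mp (by rw [← hSdef]; exact hSzero)
    have hdeg : ∀ v, G.degree v = k ∨ G.degree v = n - 1 := by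
      intro v
      rcases mul_eq_zero.mp (hallzero' v (Finset.mem_univ v)) with h | h
      · left; omega
      · right; omega
    have hm' : 2 * G.edgeFinset.card = k * (n - 1) + (n - k) * k := by
      have : m = m1 := by exact_mod_cast hmeq
      rw [← hmdef, this]
      exact hm1
    exact struct_iso hk hkn hdeg hm'
  · intro ⟨f⟩
    exact numMatchings_iso f 2
end
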